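/- arXiv:0910.5084 — 11 statements merged into one kernel-verified Lean document; each statement's English description precedes it below -/
import Mathlib

section
/- For all t, t₀ ∈ I one has ∂ₜs(t,t₀) = c(t₀,t); that is, the time derivative of the 'sine-type' fundamental solution at time t equals the 'cosine-type' fundamental solution based at t with its two time arguments exchanged. -/
/-- For the fundamental solutions of the TDHO equation
`u'' + κ u = 0` on an open interval `I`, one has `∂ₜs(t,t₀) = c(t₀,t)` for all
`t, t₀ ∈ I`: the time derivative of the sine-type fundamental solution equals
the cosine-type fundamental solution with its two time arguments exchanged. -/
theorem stmt_1
    (I : Set ℝ) (hIopen : IsOpen I) (hIconn : I.OrdConnected)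
    (κ : ℝ → ℝ) (hκ : ContinuousOn κ I)
    (c s c' s' : ℝ → ℝ → ℝ)
    (hcderiv : ∀ t₀ ∈ I, ∀ t ∈ I, HasDerivAt (fun u => c u t₀) (c' t t₀) t)
    (hcderiv2 : ∀ t₀ ∈ I, ∀ t ∈ I, HasDerivAt (fun u => c' u t₀) (-(κ t * c t t₀)) t)
    (hsderiv : ∀ t₀ ∈ I, ∀ t ∈ I, HasDerivAt (fun u => s u t₀) (s' t t₀) t)
    (hsderiv2 : ∀ t₀ ∈ I, ∀ t ∈ I, HasDerivAt (fun u => s' u t₀) (-(κ t * s t t₀)) t)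
    (hcinit : ∀ t₀ ∈ I, c t₀ t₀ = 1) (hcinit' : ∀ t₀ ∈ I, c' t₀ t₀ = 0)
    (hsinit : ∀ t₀ ∈ I, s t₀ t₀ = 0) (hsinit' : ∀ t₀ ∈ I, s' t₀ t₀ = 1) :
    ∀ t ∈ I, ∀ t₀ ∈ I, s' t t₀ = c t₀ t := by
  intro t ht t₀ ht₀
  set F : ℝ → ℝ := fun u => c u t * s' u t₀ - c' u t * s u t₀ with hF
  have hFderiv : ∀ u ∈ I, HasDerivAt F 0 u := by
    intro u hu
    have h := ((hcderiv t ht u hu).mul (hsderiv2 t₀ ht₀ u hu)).sub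
      ((hcderiv2 t ht u hu).mul (hsderiv t₀ ht₀ u hu))
    exact h.congr_deriv (by ring)
  have hconv : Convex ℝ I := hIconn.convex
  have hdiff : DifferentiableOn ℝ F I := fun u hu =>
    ((hFderiv u hu).differentiableAt).differentiableWithinAt
  have hconst : F t = F t₀ := by
    apply hconv.is_const_of_fderivWithin_eq_zero hdiff _ ht ht₀
    intro u hu
    rw [fderivWithin_eq_fderiv (hIopen.uniqueDiffOn u hu)
      (hFderiv u hu).differentiableAt]
    ext
    simp [(hFderiv u hu).deriv]
  have h1 : F t = s' t t₀ := by
    simp [hF, hcinit t ht, hcinit' t ht]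
  have h2 : F t₀ = c t₀ t := by
    simp [hF, hsinit t₀ ht₀, hsinit' t₀ ht₀]
  rw [← h1, hconst, h2]
end

section
/- The sine-type fundamental solution is antisymmetric in its two arguments: s(t₀,t) = −s(t,t₀) for all t, t₀ ∈ I. -/
/-- The sine-type fundamental solution of the TDHO equation
`u'' + κ u = 0` on an open interval `I` is antisymmetric in its two arguments:
`s(t₀,t) = −s(t,t₀)` for all `t, t₀ ∈ I`. -/
theorem stmt_2
    (I : Set ℝ) (hIopen : IsOpen I) (hIconn : I.OrdConnected)
    (κ : ℝ → ℝ) (hκ : ContinuousOn κ I)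
    (c s c' s' : ℝ → ℝ → ℝ)
    (hcderiv : ∀ t₀ ∈ I, ∀ t ∈ I, HasDerivAt (fun u => c u t₀) (c' t t₀) t)
    (hcderiv2 : ∀ t₀ ∈ I, ∀ t ∈ I, HasDerivAt (fun u => c' u t₀) (-(κ t * c t t₀)) t)
    (hsderiv : ∀ t₀ ∈ I, ∀ t ∈ I, HasDerivAt (fun u => s u t₀) (s' t t₀) t)
    (hsderiv2 : ∀ t₀ ∈ I, ∀ t ∈ I, HasDerivAt (fun u => s' u t₀) (-(κ t * s t t₀)) t)
    (hcinit : ∀ t₀ ∈ I, c t₀ t₀ = 1) (hcinit' : ∀ t₀ ∈ I, c' t₀ t₀ = 0)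
    (hsinit : ∀ t₀ ∈ I, s t₀ t₀ = 0) (hsinit' : ∀ t₀ ∈ I, s' t₀ t₀ = 1) :
    ∀ t ∈ I, ∀ t₀ ∈ I, s t₀ t = -s t t₀ := by
  intro t ht t₀ ht₀
  set W : ℝ → ℝ := fun u => s u t₀ * s' u t - s' u t₀ * s u t with hWdef
  have hW : ∀ u ∈ I, HasDerivAt W 0 u := by
    intro u hu
    have h1 := hsderiv t₀ ht₀ u hu
    have h2 := hsderiv2 t₀ ht₀ u hu
    have h3 := hsderiv t ht u hu
    have h4 := hsderiv2 t ht u hu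
    have h := (h1.mul h4).sub (h2.mul h3)
    convert h using 1
    · rfl
    · rfl
    · rfl
    · ring
  have key : ∀ a ∈ I, ∀ b ∈ I, a ≤ b → W b = W a := by
    intro a ha b hb hab
    have hsub : Set.Icc a b ⊆ I := hIconn.out ha hb
    exact constant_of_has_deriv_right_zero
      (fun x hx => (hW x (hsub hx)).continuousAt.continuousWithinAt)
      (fun x hx => (hW x (hsub (Set.Ico_subset_Icc_self hx))).hasDerivWithinAt)
      b ⟨hab, le_rfl⟩
  have hconst : W t = W t₀ := by
    rcases le_total t t₀ with h | h
    · exact (key t ht t₀ ht₀ h).symm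
    · exact key t₀ ht₀ t ht h
  have hWt : W t = s t t₀ := by
    simp [hWdef, hsinit t ht, hsinit' t ht]
  have hWt₀ : W t₀ = -s t₀ t := by
    simp [hWdef, hsinit t₀ ht₀, hsinit' t₀ ht₀]
  have : s t t₀ = -s t₀ t := by rw [← hWt, hconst, hWt₀]
  linarith
end

section
/- For all t, t₀ ∈ I one has s(t,t₀)·∂ₜc(t,t₀) = c(t,t₀)·c(t₀,t) − 1. (This is the derivative identity ∂ₜc(t,t₀) = (c(t,t₀)c(t₀,t) − 1)/s(t,t₀) written without division, so that it is valid also at the zeros of s(·,t₀).) -/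
/-- Wronskian of two solutions of `u'' + κ u = 0` is constant on a convex open set. -/
lemma wronskian_const
    (I : Set ℝ) (hIopen : IsOpen I) (hIconv : Convex ℝ I)
    (κ a b a' b' : ℝ → ℝ)
    (ha : ∀ t ∈ I, HasDerivAt a (a' t) t)
    (ha2 : ∀ t ∈ I, HasDerivAt a' (-(κ t * a t)) t)
    (hb : ∀ t ∈ I, HasDerivAt b (b' t) t)
    (hb2 : ∀ t ∈ I, HasDerivAt b' (-(κ t * b t)) t) :
    ∀ x ∈ I, ∀ y ∈ I,
      a x * b' x - b x * a' x = a y * b' y - b y * a' y := by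
  intro x hx y hy
  set W : ℝ → ℝ := fun u => a u * b' u - b u * a' u with hW
  have hWd : ∀ u ∈ I, HasDerivAt W 0 u := by
    intro u hu
    have h := (((ha u hu).mul (hb2 u hu)).sub ((hb u hu).mul (ha2 u hu)))
    exact h.congr_deriv (by ring)
  have hdiff : DifferentiableOn ℝ W I := fun u hu =>
    ((hWd u hu).differentiableAt).differentiableWithinAt
  refine hIconv.is_const_of_fderivWithin_eq_zero hdiff (fun u hu => ?_) hx hy
  have := ((hWd u hu).hasFDerivAt.hasFDerivWithinAt).fderivWithin
    (hIopen.uniqueDiffWithinAt hu)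
  rw [this]
  ext
  simp

/-- For the fundamental solutions of the TDHO equation
`u'' + κ u = 0` on an open interval `I`, one has
`s(t,t₀)·∂ₜc(t,t₀) = c(t,t₀)·c(t₀,t) − 1` for all `t, t₀ ∈ I`
(the derivative identity for `∂ₜc` written without division, valid also at the
zeros of `s(·,t₀)`). -/
theorem stmt_3
    (I : Set ℝ) (hIopen : IsOpen I) (hIconn : I.OrdConnected)
    (κ : ℝ → ℝ) (hκ : ContinuousOn κ I)
    (c s c' s' : ℝ → ℝ → ℝ)
    (hcderiv : ∀ t₀ ∈ I, ∀ t ∈ I, HasDerivAt (fun u => c u t₀) (c' t t₀) t)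
    (hcderiv2 : ∀ t₀ ∈ I, ∀ t ∈ I, HasDerivAt (fun u => c' u t₀) (-(κ t * c t t₀)) t)
    (hsderiv : ∀ t₀ ∈ I, ∀ t ∈ I, HasDerivAt (fun u => s u t₀) (s' t t₀) t)
    (hsderiv2 : ∀ t₀ ∈ I, ∀ t ∈ I, HasDerivAt (fun u => s' u t₀) (-(κ t * s t t₀)) t)
    (hcinit : ∀ t₀ ∈ I, c t₀ t₀ = 1) (hcinit' : ∀ t₀ ∈ I, c' t₀ t₀ = 0)
    (hsinit : ∀ t₀ ∈ I, s t₀ t₀ = 0) (hsinit' : ∀ t₀ ∈ I, s' t₀ t₀ = 1) :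
    ∀ t ∈ I, ∀ t₀ ∈ I, s t t₀ * c' t t₀ = c t t₀ * c t₀ t - 1 := by
  intro t ht t₀ ht₀
  have hconv : Convex ℝ I := hIconn.convex
  -- Wronskian of c(·,t₀) and s(·,t₀): equals 1
  have h1 := wronskian_const I hIopen hconv κ
    (fun u => c u t₀) (fun u => s u t₀) (fun u => c' u t₀) (fun u => s' u t₀)
    (hcderiv t₀ ht₀) (hcderiv2 t₀ ht₀) (hsderiv t₀ ht₀) (hsderiv2 t₀ ht₀)
    t ht t₀ ht₀
  simp only [hcinit t₀ ht₀, hsinit t₀ ht₀, hcinit' t₀ ht₀, hsinit' t₀ ht₀] at h1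
  -- Wronskian of c(·,t) and s(·,t₀): gives s'(t,t₀) = c(t₀,t)
  have h2 := wronskian_const I hIopen hconv κ
    (fun u => c u t) (fun u => s u t₀) (fun u => c' u t) (fun u => s' u t₀)
    (hcderiv t ht) (hcderiv2 t ht) (hsderiv t₀ ht₀) (hsderiv2 t₀ ht₀)
    t ht t₀ ht₀
  simp only [hcinit t ht, hcinit' t ht, hsinit t₀ ht₀, hsinit' t₀ ht₀] at h2
  simp only [mul_one, one_mul, mul_zero, zero_mul, sub_zero] at h1 h2
  rw [← h2]; linarith
end

section
/- The sine-type fundamental solutions based at different times satisfy the addition formula s(t₂,t₁) = c(t₁,t₀)·s(t₂,t₀) − c(t₂,t₀)·s(t₁,t₀) for all t₀, t₁, t₂ ∈ I (generalizing the sine-of-a-difference formula of the constant-frequency case). -/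
/-- If a function has derivative zero at every point of an open ord-connected
subset of `ℝ`, then it is constant on that set. -/
lemma const_of_hasDerivAt_zero {I : Set ℝ} (hIopen : IsOpen I)
    (hIconn : I.OrdConnected) {f : ℝ → ℝ}
    (hf : ∀ t ∈ I, HasDerivAt f 0 t) {x y : ℝ} (hx : x ∈ I) (hy : y ∈ I) :
    f x = f y := by
  have hconv : Convex ℝ I := convex_iff_ordConnected.mpr hIconn
  refine hconv.is_const_of_fderivWithin_eq_zero
    (fun t ht => ((hf t ht).differentiableAt.differentiableWithinAt)) ?_ hx hy
  intro t ht
  have h := ((hf t ht).hasFDerivAt.hasFDerivWithinAt (s := I)).fderivWithin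
    (hIopen.uniqueDiffOn t ht)
  rw [h]
  ext v
  simp

/-- The sine-type fundamental solutions of the TDHO equation
`u'' + κ u = 0` on an open interval `I`, based at different times, satisfy the
addition formula `s(t₂,t₁) = c(t₁,t₀)·s(t₂,t₀) − c(t₂,t₀)·s(t₁,t₀)` for all
`t₀, t₁, t₂ ∈ I`. -/
theorem stmt_4
    (I : Set ℝ) (hIopen : IsOpen I) (hIconn : I.OrdConnected)
    (κ : ℝ → ℝ) (hκ : ContinuousOn κ I)
    (c s c' s' : ℝ → ℝ → ℝ)
    (hcderiv : ∀ t₀ ∈ I, ∀ t ∈ I, HasDerivAt (fun u => c u t₀) (c' t t₀) t)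
    (hcderiv2 : ∀ t₀ ∈ I, ∀ t ∈ I, HasDerivAt (fun u => c' u t₀) (-(κ t * c t t₀)) t)
    (hsderiv : ∀ t₀ ∈ I, ∀ t ∈ I, HasDerivAt (fun u => s u t₀) (s' t t₀) t)
    (hsderiv2 : ∀ t₀ ∈ I, ∀ t ∈ I, HasDerivAt (fun u => s' u t₀) (-(κ t * s t t₀)) t)
    (hcinit : ∀ t₀ ∈ I, c t₀ t₀ = 1) (hcinit' : ∀ t₀ ∈ I, c' t₀ t₀ = 0)
    (hsinit : ∀ t₀ ∈ I, s t₀ t₀ = 0) (hsinit' : ∀ t₀ ∈ I, s' t₀ t₀ = 1) :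
    ∀ t₀ ∈ I, ∀ t₁ ∈ I, ∀ t₂ ∈ I,
      s t₂ t₁ = c t₁ t₀ * s t₂ t₀ - c t₂ t₀ * s t₁ t₀ := by
  intro t₀ h₀ t₁ h₁ t₂ h₂
  -- The Wronskian of c(·,t₀) and s(·,t₀) is constant, equal to 1.
  have hW : ∀ t ∈ I, c t t₀ * s' t t₀ - c' t t₀ * s t t₀ = 1 := by
    intro t ht
    have := const_of_hasDerivAt_zero hIopen hIconn
      (f := fun u => c u t₀ * s' u t₀ - c' u t₀ * s u t₀)
      (fun u hu => by
        have h := (((hcderiv t₀ h₀ u hu).mul (hsderiv2 t₀ h₀ u hu)).sub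
          ((hcderiv2 t₀ h₀ u hu).mul (hsderiv t₀ h₀ u hu)))
        convert h using 1; rfl; rfl; rfl; ring) ht h₀
    simp only [hcinit t₀ h₀, hcinit' t₀ h₀, hsinit t₀ h₀, hsinit' t₀ h₀] at this
    linarith
  -- Let g be the difference of the two sides, as a function of t₂.
  set g : ℝ → ℝ := fun t => s t t₁ - (c t₁ t₀ * s t t₀ - c t t₀ * s t₁ t₀) with hg
  set g' : ℝ → ℝ := fun t => s' t t₁ - (c t₁ t₀ * s' t t₀ - c' t t₀ * s t₁ t₀) with hg'
  have hgderiv : ∀ t ∈ I, HasDerivAt g (g' t) t := by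
    intro t ht
    have h := (hsderiv t₁ h₁ t ht).sub
      (((hsderiv t₀ h₀ t ht).const_mul (c t₁ t₀)).sub
        ((hcderiv t₀ h₀ t ht).mul_const (s t₁ t₀)))
    convert h using 1; rfl; rfl; rfl
  have hgderiv2 : ∀ t ∈ I, HasDerivAt g' (-(κ t * g t)) t := by
    intro t ht
    have h := (hsderiv2 t₁ h₁ t ht).sub
      (((hsderiv2 t₀ h₀ t ht).const_mul (c t₁ t₀)).sub
        ((hcderiv2 t₀ h₀ t ht).mul_const (s t₁ t₀)))
    convert h using 1; rfl; rfl; rfl; simp only [hg]; ring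
  have hg1 : g t₁ = 0 := by
    simp only [hg, hsinit t₁ h₁]; ring
  have hg1' : g' t₁ = 0 := by
    have := hW t₁ h₁
    simp only [hg', hsinit' t₁ h₁]; nlinarith [hW t₁ h₁]
  -- Wronskians of g with c(·,t₀) and s(·,t₀) are constant, hence zero.
  have hA : g t₂ * c' t₂ t₀ - g' t₂ * c t₂ t₀ = 0 := by
    have := const_of_hasDerivAt_zero hIopen hIconn
      (f := fun u => g u * c' u t₀ - g' u * c u t₀)
      (fun u hu => by
        have h := ((hgderiv u hu).mul (hcderiv2 t₀ h₀ u hu)).sub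
          ((hgderiv2 u hu).mul (hcderiv t₀ h₀ u hu))
        convert h using 1; rfl; rfl; rfl; ring) h₂ h₁
    simp only [hg1, hg1', zero_mul, mul_zero, sub_zero, sub_self] at this
    linarith
  have hB : g t₂ * s' t₂ t₀ - g' t₂ * s t₂ t₀ = 0 := by
    have := const_of_hasDerivAt_zero hIopen hIconn
      (f := fun u => g u * s' u t₀ - g' u * s u t₀)
      (fun u hu => by
        have h := ((hgderiv u hu).mul (hsderiv2 t₀ h₀ u hu)).sub
          ((hgderiv2 u hu).mul (hsderiv t₀ h₀ u hu))
        convert h using 1; rfl; rfl; rfl; ring) h₂ h₁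
    simp only [hg1, hg1', zero_mul, mul_zero, sub_zero, sub_self] at this
    linarith
  have hgz : g t₂ = 0 := by
    linear_combination c t₂ t₀ * hB - s t₂ t₀ * hA - g t₂ * hW t₂ h₂
  have : s t₂ t₁ - (c t₁ t₀ * s t₂ t₀ - c t₂ t₀ * s t₁ t₀) = 0 := hgz
  linarith
end

section
/- Let u₁, u₂ : I → ℝ be twice-differentiable solutions of the TDHO equation whose (constant) Wronskian W := u₁·u₂' − u₁'·u₂ is nonzero, and let b₁₁, b₁₂, b₂₂ ∈ ℝ satisfy b₁₁ > 0 and b₁₁·b₂₂ − b₁₂² = W⁻². Then Q(t) := b₁₁·u₁(t)² + b₂₂·u₂(t)² + 2·b₁₂·u₁(t)·u₂(t) is strictly positive for every t ∈ I, and the function ρ := √Q is twice differentiable on I and satisfies the Ermakov–Pinney equation ρ''(t) + κ(t)·ρ(t) = 1/ρ(t)³. -/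
/-- Let `u₁, u₂` be twice-differentiable solutions of the TDHO
equation `u'' + κ u = 0` on an open interval `I` whose (constant) Wronskian
`W = u₁ u₂' − u₁' u₂` is nonzero, and let `b₁₁, b₁₂, b₂₂ ∈ ℝ` with `b₁₁ > 0` and
`b₁₁ b₂₂ − b₁₂² = W⁻²`. Then `Q := b₁₁ u₁² + b₂₂ u₂² + 2 b₁₂ u₁ u₂` is strictly
positive on `I`, and `ρ := √Q` is twice differentiable on `I` and satisfies the
Ermakov–Pinney equation `ρ'' + κ ρ = 1/ρ³`. -/
theorem stmt_5
    (I : Set ℝ) (hIopen : IsOpen I) (hIconn : I.OrdConnected)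
    (κ : ℝ → ℝ) (hκ : ContinuousOn κ I)
    (u₁ u₂ u₁' u₂' : ℝ → ℝ)
    (hu₁d : ∀ t ∈ I, HasDerivAt u₁ (u₁' t) t)
    (hu₁dd : ∀ t ∈ I, HasDerivAt u₁' (-(κ t * u₁ t)) t)
    (hu₂d : ∀ t ∈ I, HasDerivAt u₂ (u₂' t) t)
    (hu₂dd : ∀ t ∈ I, HasDerivAt u₂' (-(κ t * u₂ t)) t)
    (W : ℝ) (hW : W ≠ 0)
    (hWdef : ∀ t ∈ I, u₁ t * u₂' t - u₁' t * u₂ t = W)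
    (b₁₁ b₁₂ b₂₂ : ℝ) (hb₁₁ : 0 < b₁₁)
    (hdet : b₁₁ * b₂₂ - b₁₂ ^ 2 = (W ^ 2)⁻¹) :
    (∀ t ∈ I, 0 < b₁₁ * u₁ t ^ 2 + b₂₂ * u₂ t ^ 2 + 2 * b₁₂ * u₁ t * u₂ t) ∧
    ∃ ρ' : ℝ → ℝ,
      (∀ t ∈ I, HasDerivAt
        (fun u => Real.sqrt (b₁₁ * u₁ u ^ 2 + b₂₂ * u₂ u ^ 2 + 2 * b₁₂ * u₁ u * u₂ u))
        (ρ' t) t) ∧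
      (∀ t ∈ I, HasDerivAt ρ'
        (1 / Real.sqrt (b₁₁ * u₁ t ^ 2 + b₂₂ * u₂ t ^ 2 + 2 * b₁₂ * u₁ t * u₂ t) ^ 3
          - κ t * Real.sqrt (b₁₁ * u₁ t ^ 2 + b₂₂ * u₂ t ^ 2 + 2 * b₁₂ * u₁ t * u₂ t)) t) := by
  have hW2 : (0:ℝ) < (W ^ 2)⁻¹ := by positivity
  -- positivity of Q
  have hQpos : ∀ t ∈ I, 0 < b₁₁ * u₁ t ^ 2 + b₂₂ * u₂ t ^ 2 + 2 * b₁₂ * u₁ t * u₂ t := by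
    intro t ht
    have hw := hWdef t ht
    rcases eq_or_ne (u₂ t) 0 with hy | hy
    · have hx : u₁ t ≠ 0 := by
        intro hx
        exact hW (by rw [← hw, hx, hy]; ring)
      have hx2 : 0 < u₁ t ^ 2 := by positivity
      have heq : b₁₁ * u₁ t ^ 2 + b₂₂ * u₂ t ^ 2 + 2 * b₁₂ * u₁ t * u₂ t
          = b₁₁ * u₁ t ^ 2 := by rw [hy]; ring
      rw [heq]; exact mul_pos hb₁₁ hx2
    · have hy2 : 0 < u₂ t ^ 2 := by positivity
      nlinarith [sq_nonneg (b₁₁ * u₁ t + b₁₂ * u₂ t), hy2, mul_pos hW2 hy2]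
  refine ⟨hQpos, ?_⟩
  -- derivative of Q
  have hQd : ∀ t ∈ I, HasDerivAt
      (fun u => b₁₁ * u₁ u ^ 2 + b₂₂ * u₂ u ^ 2 + 2 * b₁₂ * u₁ u * u₂ u)
      (2 * b₁₁ * u₁ t * u₁' t + 2 * b₂₂ * u₂ t * u₂' t
        + 2 * b₁₂ * (u₁' t * u₂ t + u₁ t * u₂' t)) t := by
    intro t ht
    have h := ((((hu₁d t ht).pow 2).const_mul b₁₁).add
        (((hu₂d t ht).pow 2).const_mul b₂₂)).add
        (((hu₁d t ht).const_mul (2 * b₁₂)).mul (hu₂d t ht))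
    refine h.congr_deriv ?_
    symm
    ring
  refine ⟨fun t => (2 * b₁₁ * u₁ t * u₁' t + 2 * b₂₂ * u₂ t * u₂' t
      + 2 * b₁₂ * (u₁' t * u₂ t + u₁ t * u₂' t))
      / (2 * Real.sqrt (b₁₁ * u₁ t ^ 2 + b₂₂ * u₂ t ^ 2 + 2 * b₁₂ * u₁ t * u₂ t)),
    fun t ht => (hQd t ht).sqrt (hQpos t ht).ne', ?_⟩
  intro t ht
  have hQt := hQpos t ht
  set s : ℝ := Real.sqrt (b₁₁ * u₁ t ^ 2 + b₂₂ * u₂ t ^ 2 + 2 * b₁₂ * u₁ t * u₂ t) with hs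
  have hspos : 0 < s := Real.sqrt_pos.2 hQt
  have hs2 : s ^ 2 = b₁₁ * u₁ t ^ 2 + b₂₂ * u₂ t ^ 2 + 2 * b₁₂ * u₁ t * u₂ t :=
    Real.sq_sqrt hQt.le
  -- derivative of Q' (the numerator)
  have hQ'd : HasDerivAt (fun u => 2 * b₁₁ * u₁ u * u₁' u + 2 * b₂₂ * u₂ u * u₂' u
      + 2 * b₁₂ * (u₁' u * u₂ u + u₁ u * u₂' u))
      ((2 * b₁₁ * u₁' t) * u₁' t + (2 * b₁₁ * u₁ t) * (-(κ t * u₁ t))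
        + ((2 * b₂₂ * u₂' t) * u₂' t + (2 * b₂₂ * u₂ t) * (-(κ t * u₂ t)))
        + 2 * b₁₂ * ((-(κ t * u₁ t)) * u₂ t + u₁' t * u₂' t
            + (u₁' t * u₂' t + u₁ t * (-(κ t * u₂ t))))) t := by
    exact ((((hu₁d t ht).const_mul (2 * b₁₁)).mul (hu₁dd t ht)).add
        (((hu₂d t ht).const_mul (2 * b₂₂)).mul (hu₂dd t ht))).add
        ((((hu₁dd t ht).mul (hu₂d t ht)).add ((hu₁d t ht).mul (hu₂dd t ht))).const_mul (2 * b₁₂))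
  -- derivative of the denominator
  have hdend : HasDerivAt
      (fun u => 2 * Real.sqrt (b₁₁ * u₁ u ^ 2 + b₂₂ * u₂ u ^ 2 + 2 * b₁₂ * u₁ u * u₂ u))
      (2 * ((2 * b₁₁ * u₁ t * u₁' t + 2 * b₂₂ * u₂ t * u₂' t
        + 2 * b₁₂ * (u₁' t * u₂ t + u₁ t * u₂' t)) / (2 * s))) t :=
    ((hQd t ht).sqrt hQt.ne').const_mul 2
  have hρ'd := hQ'd.div hdend (by positivity)
  refine hρ'd.congr_deriv ?_
  symm
  have hsne : s ≠ 0 := hspos.ne'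
  have hw := hWdef t ht
  have key : (b₁₁ * u₁ t ^ 2 + b₂₂ * u₂ t ^ 2 + 2 * b₁₂ * u₁ t * u₂ t)
      * (b₁₁ * u₁' t ^ 2 + b₂₂ * u₂' t ^ 2 + 2 * b₁₂ * u₁' t * u₂' t)
      - (b₁₁ * u₁ t * u₁' t + b₂₂ * u₂ t * u₂' t + b₁₂ * (u₁' t * u₂ t + u₁ t * u₂' t)) ^ 2
      = 1 := by
    have : (b₁₁ * u₁ t ^ 2 + b₂₂ * u₂ t ^ 2 + 2 * b₁₂ * u₁ t * u₂ t)
        * (b₁₁ * u₁' t ^ 2 + b₂₂ * u₂' t ^ 2 + 2 * b₁₂ * u₁' t * u₂' t)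
        - (b₁₁ * u₁ t * u₁' t + b₂₂ * u₂ t * u₂' t + b₁₂ * (u₁' t * u₂ t + u₁ t * u₂' t)) ^ 2
        = (b₁₁ * b₂₂ - b₁₂ ^ 2) * (u₁ t * u₂' t - u₁' t * u₂ t) ^ 2 := by ring
    rw [this, hw, hdet]
    field_simp
  rw [← hs2] at key ⊢
  rw [Real.sqrt_sq hspos.le]
  field_simp
  linear_combination (-1) * key - κ t * s ^ 2 * hs2
end

section
/- Let ρ : I → (0,∞) be a twice-differentiable solution of the Ermakov–Pinney equation and fix t₀ ∈ I. Define θ(t) := ∫_{t₀}^{t} ρ(τ)⁻² dτ and set c̃(t) := (ρ(t)/ρ(t₀))·cos θ(t) − ρ(t)·ρ'(t₀)·sin θ(t) and s̃(t) := ρ(t)·ρ(t₀)·sin θ(t). Then c̃ and s̃ are twice-differentiable solutions of the TDHO equation u'' + κ·u = 0 on I satisfying c̃(t₀) = 1, c̃'(t₀) = 0, s̃(t₀) = 0, s̃'(t₀) = 1; i.e. they are the fundamental solutions c(·,t₀) and s(·,t₀). -/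
/-- Let `ρ : I → (0,∞)` be a twice-differentiable solution of the
Ermakov–Pinney equation `ρ'' + κ ρ = 1/ρ³` on an open interval `I`, fix `t₀ ∈ I`,
and set `θ(t) = ∫_{t₀}^{t} ρ(τ)⁻² dτ`,
`c̃(t) = (ρ(t)/ρ(t₀))·cos θ(t) − ρ(t)·ρ'(t₀)·sin θ(t)` and
`s̃(t) = ρ(t)·ρ(t₀)·sin θ(t)`. Then `c̃` and `s̃` are twice-differentiable
solutions of the TDHO equation `u'' + κ u = 0` on `I` with `c̃(t₀) = 1`,
`c̃'(t₀) = 0`, `s̃(t₀) = 0`, `s̃'(t₀) = 1`, i.e. they are the fundamental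
solutions `c(·,t₀)` and `s(·,t₀)`. -/
theorem stmt_6
    (I : Set ℝ) (hIopen : IsOpen I) (hIconn : I.OrdConnected)
    (κ : ℝ → ℝ) (hκ : ContinuousOn κ I)
    (ρ ρ' : ℝ → ℝ) (hρpos : ∀ t ∈ I, 0 < ρ t)
    (hρd : ∀ t ∈ I, HasDerivAt ρ (ρ' t) t)
    (hρdd : ∀ t ∈ I, HasDerivAt ρ' (1 / ρ t ^ 3 - κ t * ρ t) t)
    (t₀ : ℝ) (ht₀ : t₀ ∈ I)
    (ct st : ℝ → ℝ)
    (hct : ∀ t : ℝ, ct t =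
      (ρ t / ρ t₀) * Real.cos (∫ τ in t₀..t, (ρ τ ^ 2)⁻¹)
        - ρ t * ρ' t₀ * Real.sin (∫ τ in t₀..t, (ρ τ ^ 2)⁻¹))
    (hst : ∀ t : ℝ, st t = ρ t * ρ t₀ * Real.sin (∫ τ in t₀..t, (ρ τ ^ 2)⁻¹)) :
    ct t₀ = 1 ∧ st t₀ = 0 ∧
    ∃ ct' st' : ℝ → ℝ,
      (∀ t ∈ I, HasDerivAt ct (ct' t) t) ∧ ct' t₀ = 0 ∧
      (∀ t ∈ I, HasDerivAt ct' (-(κ t * ct t)) t) ∧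
      (∀ t ∈ I, HasDerivAt st (st' t) t) ∧ st' t₀ = 1 ∧
      (∀ t ∈ I, HasDerivAt st' (-(κ t * st t)) t) := by
  set f : ℝ → ℝ := fun τ => (ρ τ ^ 2)⁻¹ with hf
  set θ : ℝ → ℝ := fun t => ∫ τ in t₀..t, f τ with hθdef
  have hρne : ∀ t ∈ I, ρ t ≠ 0 := fun t ht => (hρpos t ht).ne'
  have hρcont : ContinuousOn ρ I := fun t ht => (hρd t ht).continuousAt.continuousWithinAt
  have hfcont : ContinuousOn f I := by
    apply (hρcont.pow 2).inv₀
    intro t ht; exact pow_ne_zero _ (hρne t ht)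
  have hθ : ∀ t ∈ I, HasDerivAt θ (f t) t := by
    intro t ht
    apply intervalIntegral.integral_hasDerivAt_right
    · exact (hfcont.mono (hIconn.uIcc_subset ht₀ ht)).intervalIntegrable
    · exact hfcont.stronglyMeasurableAtFilter hIopen t ht
    · exact hfcont.continuousAt (hIopen.mem_nhds ht)
  have hθ0 : θ t₀ = 0 := intervalIntegral.integral_same
  -- generic solution
  have key : ∀ a b : ℝ,
      (∀ t ∈ I, HasDerivAt (fun t => ρ t * (a * Real.cos (θ t) + b * Real.sin (θ t)))
        (ρ' t * (a * Real.cos (θ t) + b * Real.sin (θ t))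
          + (-a * Real.sin (θ t) + b * Real.cos (θ t)) / ρ t) t) ∧
      (∀ t ∈ I, HasDerivAt (fun t => ρ' t * (a * Real.cos (θ t) + b * Real.sin (θ t))
          + (-a * Real.sin (θ t) + b * Real.cos (θ t)) / ρ t)
        (-(κ t * (ρ t * (a * Real.cos (θ t) + b * Real.sin (θ t))))) t) := by
    intro a b
    have hW : ∀ t ∈ I, HasDerivAt (fun t => a * Real.cos (θ t) + b * Real.sin (θ t))
        ((-a * Real.sin (θ t) + b * Real.cos (θ t)) * f t) t := by
      intro t ht
      have hc := ((Real.hasDerivAt_cos (θ t)).comp t (hθ t ht)).const_mul a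
      have hs := ((Real.hasDerivAt_sin (θ t)).comp t (hθ t ht)).const_mul b
      refine (hc.add hs).congr_deriv ?_; ring
    have hV : ∀ t ∈ I, HasDerivAt (fun t => -a * Real.sin (θ t) + b * Real.cos (θ t))
        (-(a * Real.cos (θ t) + b * Real.sin (θ t)) * f t) t := by
      intro t ht
      have hs := ((Real.hasDerivAt_sin (θ t)).comp t (hθ t ht)).const_mul (-a)
      have hc := ((Real.hasDerivAt_cos (θ t)).comp t (hθ t ht)).const_mul b
      refine (hs.add hc).congr_deriv ?_; ring
    constructor
    · intro t ht
      have h := (hρd t ht).mul (hW t ht)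
      refine h.congr_deriv ?_
      have := hρne t ht
      simp only [hf]
      field_simp
    · intro t ht
      have h1 := (hρdd t ht).mul (hW t ht)
      have h2 := (hV t ht).div (hρd t ht) (hρne t ht)
      refine (h1.add h2).congr_deriv ?_
      have hne := hρne t ht
      simp only [hf]
      field_simp
      ring
  obtain ⟨hc1, hc2⟩ := key (ρ t₀)⁻¹ (-ρ' t₀)
  obtain ⟨hs1, hs2⟩ := key 0 (ρ t₀)
  have hρ0 := hρne t₀ ht₀
  have hcteq : ∀ t, ct t = ρ t * ((ρ t₀)⁻¹ * Real.cos (θ t) + -ρ' t₀ * Real.sin (θ t)) := by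
    intro t; rw [hct]; ring
  have hsteq : ∀ t, st t = ρ t * (0 * Real.cos (θ t) + ρ t₀ * Real.sin (θ t)) := by
    intro t; rw [hst]; ring
  have hctf : ct = fun t => ρ t * ((ρ t₀)⁻¹ * Real.cos (θ t) + -ρ' t₀ * Real.sin (θ t)) :=
    funext hcteq
  have hstf : st = fun t => ρ t * (0 * Real.cos (θ t) + ρ t₀ * Real.sin (θ t)) :=
    funext hsteq
  refine ⟨by rw [hcteq, hθ0]; field_simp; simp, by rw [hsteq, hθ0]; simp,
    fun t => ρ' t * ((ρ t₀)⁻¹ * Real.cos (θ t) + -ρ' t₀ * Real.sin (θ t))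
      + (-(ρ t₀)⁻¹ * Real.sin (θ t) + -ρ' t₀ * Real.cos (θ t)) / ρ t,
    fun t => ρ' t * (0 * Real.cos (θ t) + ρ t₀ * Real.sin (θ t))
      + (-0 * Real.sin (θ t) + ρ t₀ * Real.cos (θ t)) / ρ t,
    ?_, ?_, ?_, ?_, ?_, ?_⟩
  · intro t ht; rw [hctf]; exact hc1 t ht
  · simp only [hθ0, Real.cos_zero, Real.sin_zero]; field_simp; ring
  · intro t ht; rw [hcteq]; exact hc2 t ht
  · intro t ht; rw [hstf]; exact hs1 t ht
  · simp only [hθ0, Real.cos_zero, Real.sin_zero]; field_simp; ring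
  · intro t ht; rw [hsteq]; exact hs2 t ht
end

section
/- Let ρ : I → (0,∞) be a twice-differentiable solution of the Ermakov–Pinney equation and fix t₀ ∈ I. Then the complex-valued function u(t) := ρ(t)·exp(−i·∫_{t₀}^{t} ρ(τ)⁻² dτ) is a twice-differentiable solution of the complex TDHO equation u''(t) + κ(t)·u(t) = 0 on I, and it satisfies the constant normalization u(t)·conj(u'(t)) − u'(t)·conj(u(t)) = 2i for every t ∈ I. -/
set_option maxHeartbeats 1000000

/-- Let `ρ : I → (0,∞)` be a twice-differentiable solution of the
Ermakov–Pinney equation `ρ'' + κ ρ = 1/ρ³` on an open interval `I` and fix `t₀ ∈ I`.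
Then `u(t) = ρ(t)·exp(−i ∫_{t₀}^{t} ρ(τ)⁻² dτ)` is a twice-differentiable solution
of the complex TDHO equation `u'' + κ u = 0` on `I`, and it satisfies the constant
normalization `u·conj(u') − u'·conj(u) = 2i` on `I`. -/
theorem stmt_7
    (I : Set ℝ) (hIopen : IsOpen I) (hIconn : I.OrdConnected)
    (κ : ℝ → ℝ) (hκ : ContinuousOn κ I)
    (ρ ρ' : ℝ → ℝ) (hρpos : ∀ t ∈ I, 0 < ρ t)
    (hρd : ∀ t ∈ I, HasDerivAt ρ (ρ' t) t)
    (hρdd : ∀ t ∈ I, HasDerivAt ρ' (1 / ρ t ^ 3 - κ t * ρ t) t)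
    (t₀ : ℝ) (ht₀ : t₀ ∈ I)
    (u : ℝ → ℂ)
    (hu : ∀ t : ℝ, u t = (ρ t : ℂ) *
      Complex.exp (-Complex.I * ((∫ τ in t₀..t, (ρ τ ^ 2)⁻¹ : ℝ) : ℂ))) :
    ∃ u' : ℝ → ℂ,
      (∀ t ∈ I, HasDerivAt u (u' t) t) ∧
      (∀ t ∈ I, HasDerivAt u' (-((κ t : ℂ) * u t)) t) ∧
      (∀ t ∈ I, u t * starRingEnd ℂ (u' t) - u' t * starRingEnd ℂ (u t)
        = 2 * Complex.I) := by
  set θ : ℝ → ℝ := fun t => ∫ τ in t₀..t, (ρ τ ^ 2)⁻¹ with hθ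
  have hρne : ∀ t ∈ I, (ρ t : ℝ) ≠ 0 := fun t ht => (hρpos t ht).ne'
  have hρneC : ∀ t ∈ I, (ρ t : ℂ) ≠ 0 := fun t ht => by
    exact_mod_cast Complex.ofReal_ne_zero.mpr (hρne t ht)
  have hρcont : ContinuousOn ρ I := fun t ht => (hρd t ht).continuousAt.continuousWithinAt
  have hfcont : ContinuousOn (fun τ => (ρ τ ^ 2)⁻¹) I := by
    exact ((hρcont.pow 2).inv₀ (fun t ht => pow_ne_zero 2 (hρne t ht)))
  have hθd : ∀ t ∈ I, HasDerivAt θ ((ρ t ^ 2)⁻¹) t := by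
    intro t ht
    have hsub : Set.uIcc t₀ t ⊆ I := hIconn.uIcc_subset ht₀ ht
    have hint : IntervalIntegrable (fun τ => (ρ τ ^ 2)⁻¹) MeasureTheory.volume t₀ t :=
      (hfcont.mono hsub).intervalIntegrable
    exact intervalIntegral.integral_hasDerivAt_right hint
      (hfcont.stronglyMeasurableAtFilter hIopen t ht)
      (hfcont.continuousAt (hIopen.mem_nhds ht))
  set E : ℝ → ℂ := fun t => Complex.exp (-Complex.I * (θ t : ℂ)) with hE
  have hEd : ∀ t ∈ I, HasDerivAt E (-Complex.I * ((ρ t ^ 2)⁻¹ : ℝ) * E t) t := by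
    intro t ht
    have h1 : HasDerivAt (fun s => ((θ s : ℝ) : ℂ)) (((ρ t ^ 2)⁻¹ : ℝ) : ℂ) t :=
      (hθd t ht).ofReal_comp
    have h2 := (h1.const_mul (-Complex.I)).cexp
    convert h2 using 1
    ring
  refine ⟨fun t => ((ρ' t : ℂ) - Complex.I * (ρ t : ℂ)⁻¹) * E t, ?_, ?_, ?_⟩
  · intro t ht
    have h := ((hρd t ht).ofReal_comp.mul (hEd t ht))
    have hfun : u = fun s => (ρ s : ℂ) * E s := funext hu
    rw [hfun]
    refine h.congr_deriv (Eq.symm ?_)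
    have : ((ρ t ^ 2)⁻¹ : ℝ) = ((ρ t : ℂ) ^ 2)⁻¹ := by push_cast; ring
    rw [this]
    field_simp [hρneC t ht]
    ring
  · intro t ht
    have hinvC : HasDerivAt (fun s => ((ρ s : ℂ))⁻¹) (((-(ρ' t) / ρ t ^ 2 : ℝ) : ℂ)) t := by
      simpa only [Pi.inv_apply, Complex.ofReal_inv] using ((hρd t ht).inv (hρne t ht)).ofReal_comp
    have h1 : HasDerivAt (fun s => ((ρ' s : ℂ) - Complex.I * (ρ s : ℂ)⁻¹))
        (((1 / ρ t ^ 3 - κ t * ρ t : ℝ) : ℂ)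
          - Complex.I * ((-(ρ' t) / ρ t ^ 2 : ℝ) : ℂ)) t := by
      exact (hρdd t ht).ofReal_comp.sub (hinvC.const_mul Complex.I)
    have h := h1.mul (hEd t ht)
    refine h.congr_deriv (Eq.symm ?_)
    rw [hu t]
    show -(↑(κ t) * ((ρ t : ℂ) * E t)) = _
    have hcast : ((ρ t ^ 2)⁻¹ : ℝ) = ((ρ t : ℂ) ^ 2)⁻¹ := by push_cast; ring
    rw [hcast]
    push_cast
    field_simp [hρneC t ht]
    linear_combination (-E t) * Complex.I_sq
  · intro t ht
    rw [hu t]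
    show (ρ t : ℂ) * E t * starRingEnd ℂ (((ρ' t : ℂ) - Complex.I * (ρ t : ℂ)⁻¹) * E t)
      - ((ρ' t : ℂ) - Complex.I * (ρ t : ℂ)⁻¹) * E t * starRingEnd ℂ ((ρ t : ℂ) * E t) = 2 * Complex.I
    have hconjE : starRingEnd ℂ (E t) = Complex.exp (Complex.I * (θ t : ℂ)) := by
      rw [hE]
      rw [← Complex.exp_conj]
      congr 1
      simp [map_mul, Complex.conj_I]
    have hEE : E t * starRingEnd ℂ (E t) = 1 := by
      rw [hconjE, hE, ← Complex.exp_add]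
      simp
    simp only [map_mul, map_sub, Complex.conj_I, Complex.conj_ofReal, map_inv₀]
    have h1 : (ρ t : ℂ) * E t * (((ρ' t : ℂ) - -Complex.I * (ρ t : ℂ)⁻¹) * starRingEnd ℂ (E t))
        - ((ρ' t : ℂ) - Complex.I * (ρ t : ℂ)⁻¹) * E t * ((ρ t : ℂ) * starRingEnd ℂ (E t))
      = (E t * starRingEnd ℂ (E t)) * (2 * Complex.I * ((ρ t : ℂ) * (ρ t : ℂ)⁻¹)) := by ring
    rw [h1, hEE, mul_inv_cancel₀ (hρneC t ht)]
    ring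
end

section
/- Fix ω > 0 and define the Bogoliubov coefficients A_ω(t,t₀) := ½·(c(t,t₀) + ∂ₜs(t,t₀)) + (i/2)·(ω⁻¹·∂ₜc(t,t₀) − ω·s(t,t₀)) and B_ω(t,t₀) := ½·(c(t,t₀) − ∂ₜs(t,t₀)) + (i/2)·(ω⁻¹·∂ₜc(t,t₀) + ω·s(t,t₀)). Then for all t, t₀ ∈ I: (1) |A_ω(t,t₀)|² − |B_ω(t,t₀)|² = 1, so in particular A_ω(t,t₀) never vanishes; (2) A_ω(t,t₀) = conj(A_ω(t₀,t)); (3) B_ω(t,t₀) = −B_ω(t₀,t). -/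
/-- A function with derivative zero at every point of an open convex set is constant there. -/
lemma stmt8_const_on {I : Set ℝ} (hIopen : IsOpen I) (hIconv : Convex ℝ I)
    {f : ℝ → ℝ} (hf : ∀ x ∈ I, HasDerivAt f 0 x) {x y : ℝ} (hx : x ∈ I) (hy : y ∈ I) :
    f x = f y := by
  refine hIconv.is_const_of_fderivWithin_eq_zero (𝕜 := ℝ)
    (fun z hz => ((hf z hz).differentiableAt).differentiableWithinAt) (fun z hz => ?_) hx hy
  rw [fderivWithin_of_isOpen hIopen hz]
  have h := (hf z hz).hasFDerivAt.fderiv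
  rw [h]; ext w; simp

/-- The Wronskian of two solutions of the TDHO equation is constant. -/
lemma stmt8_wronskian {I : Set ℝ} (hIopen : IsOpen I) (hIconv : Convex ℝ I)
    (κ : ℝ → ℝ) {f f' g g' : ℝ → ℝ}
    (hf : ∀ x ∈ I, HasDerivAt f (f' x) x) (hf2 : ∀ x ∈ I, HasDerivAt f' (-(κ x * f x)) x)
    (hg : ∀ x ∈ I, HasDerivAt g (g' x) x) (hg2 : ∀ x ∈ I, HasDerivAt g' (-(κ x * g x)) x)
    {x y : ℝ} (hx : x ∈ I) (hy : y ∈ I) :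
    f x * g' x - f' x * g x = f y * g' y - f' y * g y := by
  refine stmt8_const_on hIopen hIconv (f := fun z => f z * g' z - f' z * g z)
    (fun z hz => ?_) hx hy
  have := ((hf z hz).mul (hg2 z hz)).sub ((hf2 z hz).mul (hg z hz))
  exact this.congr_deriv (by ring)

/-- A solution of the TDHO equation vanishing to first order at one point of `I`
vanishes to first order at every point of `I`. -/
lemma stmt8_unique {I : Set ℝ} (hIopen : IsOpen I) (hIconv : Convex ℝ I)
    (κ : ℝ → ℝ) {c s c' s' w w' : ℝ → ℝ}
    (hc : ∀ x ∈ I, HasDerivAt c (c' x) x) (hc2 : ∀ x ∈ I, HasDerivAt c' (-(κ x * c x)) x)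
    (hs : ∀ x ∈ I, HasDerivAt s (s' x) x) (hs2 : ∀ x ∈ I, HasDerivAt s' (-(κ x * s x)) x)
    (hw : ∀ x ∈ I, HasDerivAt w (w' x) x) (hw2 : ∀ x ∈ I, HasDerivAt w' (-(κ x * w x)) x)
    {t t₀ : ℝ} (ht : t ∈ I) (ht₀ : t₀ ∈ I)
    (hW : c t₀ * s' t₀ - c' t₀ * s t₀ = 1)
    (hwt : w t = 0) (hwt' : w' t = 0) : w t₀ = 0 ∧ w' t₀ = 0 := by
  have h1 : w t₀ * c' t₀ - w' t₀ * c t₀ = 0 := by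
    have := stmt8_wronskian hIopen hIconv κ hw hw2 hc hc2 ht₀ ht
    rw [hwt, hwt'] at this; linarith
  have h2 : w t₀ * s' t₀ - w' t₀ * s t₀ = 0 := by
    have := stmt8_wronskian hIopen hIconv κ hw hw2 hs hs2 ht₀ ht
    rw [hwt, hwt'] at this; linarith
  constructor
  · linear_combination -(w t₀) * hW + (c t₀) * h2 - (s t₀) * h1
  · linear_combination -(w' t₀) * hW + (c' t₀) * h2 - (s' t₀) * h1

/-- Fix `ω > 0` and define the Bogoliubov coefficients
`A_ω(t,t₀) = ½(c(t,t₀) + ∂ₜs(t,t₀)) + (i/2)(ω⁻¹ ∂ₜc(t,t₀) − ω s(t,t₀))` and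
`B_ω(t,t₀) = ½(c(t,t₀) − ∂ₜs(t,t₀)) + (i/2)(ω⁻¹ ∂ₜc(t,t₀) + ω s(t,t₀))`, where
`c, s` are the fundamental solutions of the TDHO equation on an open interval `I`.
Then for all `t, t₀ ∈ I`: `|A|² − |B|² = 1` (so `A` never vanishes),
`A(t,t₀) = conj(A(t₀,t))` and `B(t,t₀) = −B(t₀,t)`. -/
theorem stmt_8
    (I : Set ℝ) (hIopen : IsOpen I) (hIconn : I.OrdConnected)
    (κ : ℝ → ℝ) (hκ : ContinuousOn κ I)
    (c s c' s' : ℝ → ℝ → ℝ)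
    (hcderiv : ∀ t₀ ∈ I, ∀ t ∈ I, HasDerivAt (fun u => c u t₀) (c' t t₀) t)
    (hcderiv2 : ∀ t₀ ∈ I, ∀ t ∈ I, HasDerivAt (fun u => c' u t₀) (-(κ t * c t t₀)) t)
    (hsderiv : ∀ t₀ ∈ I, ∀ t ∈ I, HasDerivAt (fun u => s u t₀) (s' t t₀) t)
    (hsderiv2 : ∀ t₀ ∈ I, ∀ t ∈ I, HasDerivAt (fun u => s' u t₀) (-(κ t * s t t₀)) t)
    (hcinit : ∀ t₀ ∈ I, c t₀ t₀ = 1) (hcinit' : ∀ t₀ ∈ I, c' t₀ t₀ = 0)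
    (hsinit : ∀ t₀ ∈ I, s t₀ t₀ = 0) (hsinit' : ∀ t₀ ∈ I, s' t₀ t₀ = 1)
    (ω : ℝ) (hω : 0 < ω) (A B : ℝ → ℝ → ℂ)
    (hA : ∀ t t₀ : ℝ, A t t₀ =
      (1 / 2 : ℂ) * ((c t t₀ : ℂ) + (s' t t₀ : ℂ)) +
        Complex.I / 2 * ((ω⁻¹ * c' t t₀ - ω * s t t₀ : ℝ) : ℂ))
    (hB : ∀ t t₀ : ℝ, B t t₀ =
      (1 / 2 : ℂ) * ((c t t₀ : ℂ) - (s' t t₀ : ℂ)) +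
        Complex.I / 2 * ((ω⁻¹ * c' t t₀ + ω * s t t₀ : ℝ) : ℂ)) :
    ∀ t ∈ I, ∀ t₀ ∈ I,
      ‖A t t₀‖ ^ 2 - ‖B t t₀‖ ^ 2 = 1 ∧
      A t t₀ ≠ 0 ∧
      A t t₀ = starRingEnd ℂ (A t₀ t) ∧
      B t t₀ = -B t₀ t := by
  intro t ht t₀ ht₀
  have hIconv : Convex ℝ I := hIconn.convex
  -- the Wronskian identity
  have hW : ∀ a ∈ I, ∀ x ∈ I, c x a * s' x a - c' x a * s x a = 1 := by
    intro a ha x hx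
    have := stmt8_wronskian hIopen hIconv κ (hcderiv a ha) (hcderiv2 a ha)
      (hsderiv a ha) (hsderiv2 a ha) hx ha
    rw [this, hcinit a ha, hcinit' a ha, hsinit a ha, hsinit' a ha]; ring
  have hWt : c t t₀ * s' t t₀ - c' t t₀ * s t t₀ = 1 := hW t₀ ht₀ t ht
  have hWs : c t₀ t * s' t₀ t - c' t₀ t * s t₀ t = 1 := hW t ht t₀ ht₀
  -- symmetry identities via uniqueness (Wronskian trick)
  have hcc : c t₀ t = s' t t₀ ∧ c' t₀ t = -c' t t₀ := by
    have hw : ∀ x ∈ I, HasDerivAt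
        (fun x => c x t - (s' t t₀ * c x t₀ - c' t t₀ * s x t₀))
        (c' x t - (s' t t₀ * c' x t₀ - c' t t₀ * s' x t₀)) x := fun x hx =>
      (hcderiv t ht x hx).sub (((hcderiv t₀ ht₀ x hx).const_mul _).sub
        ((hsderiv t₀ ht₀ x hx).const_mul _))
    have hw2 : ∀ x ∈ I, HasDerivAt
        (fun x => c' x t - (s' t t₀ * c' x t₀ - c' t t₀ * s' x t₀))
        (-(κ x * (c x t - (s' t t₀ * c x t₀ - c' t t₀ * s x t₀)))) x := by
      intro x hx
      have := (hcderiv2 t ht x hx).sub (((hcderiv2 t₀ ht₀ x hx).const_mul (s' t t₀)).sub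
        ((hsderiv2 t₀ ht₀ x hx).const_mul (c' t t₀)))
      exact this.congr_deriv (by ring)
    have := stmt8_unique hIopen hIconv κ (hcderiv t ht) (hcderiv2 t ht)
      (hsderiv t ht) (hsderiv2 t ht) hw hw2 ht ht₀ hWs
      (by show c t t - (s' t t₀ * c t t₀ - c' t t₀ * s t t₀) = 0
          rw [hcinit t ht]; linarith [hWt])
      (by show c' t t - (s' t t₀ * c' t t₀ - c' t t₀ * s' t t₀) = 0
          rw [hcinit' t ht]; ring)
    obtain ⟨h1, h2⟩ := this
    simp only [hcinit t₀ ht₀, hsinit t₀ ht₀, hcinit' t₀ ht₀, hsinit' t₀ ht₀] at h1 h2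
    constructor <;> linarith
  have hss : s t₀ t = -s t t₀ ∧ s' t₀ t = c t t₀ := by
    have hw : ∀ x ∈ I, HasDerivAt
        (fun x => s x t - (c t t₀ * s x t₀ - s t t₀ * c x t₀))
        (s' x t - (c t t₀ * s' x t₀ - s t t₀ * c' x t₀)) x := fun x hx =>
      (hsderiv t ht x hx).sub (((hsderiv t₀ ht₀ x hx).const_mul _).sub
        ((hcderiv t₀ ht₀ x hx).const_mul _))
    have hw2 : ∀ x ∈ I, HasDerivAt
        (fun x => s' x t - (c t t₀ * s' x t₀ - s t t₀ * c' x t₀))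
        (-(κ x * (s x t - (c t t₀ * s x t₀ - s t t₀ * c x t₀)))) x := by
      intro x hx
      have := (hsderiv2 t ht x hx).sub (((hsderiv2 t₀ ht₀ x hx).const_mul (c t t₀)).sub
        ((hcderiv2 t₀ ht₀ x hx).const_mul (s t t₀)))
      exact this.congr_deriv (by ring)
    have := stmt8_unique hIopen hIconv κ (hcderiv t ht) (hcderiv2 t ht)
      (hsderiv t ht) (hsderiv2 t ht) hw hw2 ht ht₀ hWs
      (by show s t t - (c t t₀ * s t t₀ - s t t₀ * c t t₀) = 0
          rw [hsinit t ht]; ring)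
      (by show s' t t - (c t t₀ * s' t t₀ - s t t₀ * c' t t₀) = 0
          rw [hsinit' t ht]; linarith [hWt])
    obtain ⟨h1, h2⟩ := this
    simp only [hcinit t₀ ht₀, hsinit t₀ ht₀, hcinit' t₀ ht₀, hsinit' t₀ ht₀] at h1 h2
    constructor <;> linarith
  obtain ⟨h1, h3⟩ := hcc
  obtain ⟨h2, h4⟩ := hss
  have hω' : ω⁻¹ * ω = 1 := inv_mul_cancel₀ hω.ne'
  -- |A|² - |B|² = 1
  have habs : ‖A t t₀‖ ^ 2 - ‖B t t₀‖ ^ 2 = 1 := by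
    rw [← Complex.normSq_eq_norm_sq, ← Complex.normSq_eq_norm_sq, hA, hB]
    simp [Complex.normSq_apply, Complex.add_re, Complex.add_im, Complex.mul_re,
      Complex.mul_im, Complex.div_re, Complex.div_im, Complex.normSq]
    ring_nf
    linear_combination hWt - (c' t t₀ * s t t₀) * (mul_inv_cancel₀ hω.ne' : ω * ω⁻¹ = 1)
  refine ⟨habs, ?_, ?_, ?_⟩
  · intro h0
    rw [h0] at habs
    simp at habs
    nlinarith [sq_nonneg (‖B t t₀‖)]
  · rw [hA, hA]
    apply Complex.ext <;>
      simp [map_add, map_mul, map_div₀, Complex.conj_I, Complex.add_re, Complex.add_im,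
        Complex.mul_re, Complex.mul_im, Complex.div_re, Complex.div_im, Complex.normSq,
        h1, h2, h3, h4] <;> ring
  · rw [hB, hB]
    apply Complex.ext <;>
      simp [map_add, map_mul, map_div₀, Complex.conj_I, Complex.add_re, Complex.add_im,
        Complex.mul_re, Complex.mul_im, Complex.div_re, Complex.div_im, Complex.normSq,
        h1, h2, h3, h4] <;> ring
end

section
/- Conservation of the Lewis invariant: let ρ : I → (0,∞) be a twice-differentiable solution of the Ermakov–Pinney equation and let q : I → ℝ be any twice-differentiable solution of the TDHO equation q''(t) + κ(t)·q(t) = 0. Then the function t ↦ ½·( q(t)²/ρ(t)² + (ρ(t)·q'(t) − ρ'(t)·q(t))² ) is constant on I. -/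
/-- (Conservation of the Lewis invariant.) Let `ρ : I → (0,∞)` be
a twice-differentiable solution of the Ermakov–Pinney equation `ρ'' + κ ρ = 1/ρ³`
on an open interval `I` and let `q` be any twice-differentiable solution of the
TDHO equation `q'' + κ q = 0` on `I`. Then
`t ↦ ½(q(t)²/ρ(t)² + (ρ(t) q'(t) − ρ'(t) q(t))²)` is constant on `I`. -/
theorem stmt_9
    (I : Set ℝ) (hIopen : IsOpen I) (hIconn : I.OrdConnected)
    (κ : ℝ → ℝ) (hκ : ContinuousOn κ I)
    (ρ ρ' q q' : ℝ → ℝ) (hρpos : ∀ t ∈ I, 0 < ρ t)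
    (hρd : ∀ t ∈ I, HasDerivAt ρ (ρ' t) t)
    (hρdd : ∀ t ∈ I, HasDerivAt ρ' (1 / ρ t ^ 3 - κ t * ρ t) t)
    (hqd : ∀ t ∈ I, HasDerivAt q (q' t) t)
    (hqdd : ∀ t ∈ I, HasDerivAt q' (-(κ t * q t)) t) :
    ∀ t₁ ∈ I, ∀ t₂ ∈ I,
      1 / 2 * (q t₁ ^ 2 / ρ t₁ ^ 2 + (ρ t₁ * q' t₁ - ρ' t₁ * q t₁) ^ 2) =
      1 / 2 * (q t₂ ^ 2 / ρ t₂ ^ 2 + (ρ t₂ * q' t₂ - ρ' t₂ * q t₂) ^ 2) := by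
  set F : ℝ → ℝ := fun t => 1 / 2 * (q t ^ 2 / ρ t ^ 2 + (ρ t * q' t - ρ' t * q t) ^ 2)
    with hF
  have key : ∀ t ∈ I, HasDerivAt F 0 t := by
    intro t ht
    have hρne : ρ t ≠ 0 := (hρpos t ht).ne'
    have h1 : HasDerivAt (fun t => q t ^ 2 / ρ t ^ 2)
        ((2 * q t * q' t * ρ t ^ 2 - q t ^ 2 * (2 * ρ t * ρ' t)) / (ρ t ^ 2) ^ 2) t := by
      exact HasDerivAt.div (by simpa using ((hqd t ht).fun_pow 2))
        (by simpa using ((hρd t ht).fun_pow 2)) (pow_ne_zero 2 hρne)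
    have h2 : HasDerivAt (fun t => (ρ t * q' t - ρ' t * q t) ^ 2)
        (2 * (ρ t * q' t - ρ' t * q t) *
          ((ρ' t * q' t + ρ t * (-(κ t * q t))) -
           ((1 / ρ t ^ 3 - κ t * ρ t) * q t + ρ' t * q' t))) t := by
      have := (((hρd t ht).fun_mul (hqdd t ht)).fun_sub ((hρdd t ht).fun_mul (hqd t ht))).fun_pow 2
      exact this.congr_deriv (by ring)
    have h := (h1.add h2).const_mul (1/2 : ℝ)
    have hzero : 1 / 2 * ((2 * q t * q' t * ρ t ^ 2 - q t ^ 2 * (2 * ρ t * ρ' t)) / (ρ t ^ 2) ^ 2 +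
        2 * (ρ t * q' t - ρ' t * q t) *
          ((ρ' t * q' t + ρ t * (-(κ t * q t))) -
           ((1 / ρ t ^ 3 - κ t * ρ t) * q t + ρ' t * q' t))) = 0 := by
      field_simp
      ring
    rw [hzero] at h
    exact h
  intro t₁ ht₁ t₂ ht₂
  have main : ∀ a ∈ I, ∀ b ∈ I, a ≤ b → F a = F b := by
    intro a ha b hb hab
    have hsub : Set.Icc a b ⊆ I := hIconn.out ha hb
    have := constant_of_has_deriv_right_zero (f := F) (a := a) (b := b)
      (fun x hx => ((key x (hsub hx)).continuousAt).continuousWithinAt)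
      (fun x hx => ((key x (hsub ⟨hx.1, le_of_lt hx.2⟩)).hasDerivWithinAt))
    exact (this b ⟨hab, le_rfl⟩).symm
  rcases le_total t₁ t₂ with h | h
  · exact main t₁ ht₁ t₂ ht₂ h
  · exact (main t₂ ht₂ t₁ ht₁ h).symm
end

section
/- The Feynman propagator of the TDHO satisfies the time-dependent Schrödinger equation away from caustics: fix t₀ ∈ I and q₀ ∈ ℝ, let J ⊆ I be an open interval on which s(t,t₀) > 0, and define K : ℝ × J → ℂ by K(q,t) := (2π)^{−1/2}·e^{−iπ/4}·s(t,t₀)^{−1/2}·exp( (i/(2·s(t,t₀)))·( c(t₀,t)·q² + c(t,t₀)·q₀² − 2·q·q₀ ) ), where s(t,t₀)^{−1/2} is the positive real root. Then K is smooth in q and differentiable in t, and for all (q,t) ∈ ℝ × J it satisfies i·∂ₜK(q,t) = −½·∂²_q K(q,t) + ½·κ(t)·q²·K(q,t). -/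
open Set

/-- A function with zero derivative on an ord-connected set is constant there. -/
lemma tdho_const (I : Set ℝ) (W : ℝ → ℝ)
    (hW : ∀ u ∈ I, HasDerivAt W 0 u) (hIconn : I.OrdConnected)
    {x y : ℝ} (hx : x ∈ I) (hy : y ∈ I) : W x = W y := by
  have key : ∀ a b : ℝ, a ∈ I → b ∈ I → a ≤ b → W b = W a := by
    intro a b ha hb hab
    have hsub : Icc a b ⊆ I := hIconn.out ha hb
    have hcont : ContinuousOn W (Icc a b) := fun u hu =>
      ((hW u (hsub hu)).continuousAt).continuousWithinAt
    have := constant_of_has_deriv_right_zero hcont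
      (fun u hu => ((hW u (hsub (Ico_subset_Icc_self hu))).hasDerivWithinAt))
    exact this b ⟨hab, le_rfl⟩
  rcases le_total x y with h | h
  · exact (key x y hx hy h).symm
  · exact key y x hy hx h

/-- Uniqueness for the second order linear ODE u'' = -κ u on an open ord-connected set. -/
lemma tdho_unique (I : Set ℝ) (hIopen : IsOpen I) (hIconn : I.OrdConnected)
    (κ : ℝ → ℝ) (hκ : ContinuousOn κ I)
    (f f' g g' : ℝ → ℝ)
    (hf : ∀ u ∈ I, HasDerivAt f (f' u) u)
    (hf2 : ∀ u ∈ I, HasDerivAt f' (-(κ u * f u)) u)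
    (hg : ∀ u ∈ I, HasDerivAt g (g' u) u)
    (hg2 : ∀ u ∈ I, HasDerivAt g' (-(κ u * g u)) u)
    {τ : ℝ} (hτ : τ ∈ I) (h0 : f τ = g τ) (h0' : f' τ = g' τ) :
    ∀ u ∈ I, f u = g u := by
  intro x hx
  -- find a compact interval inside I whose interior contains τ and x
  set a' := min τ x with ha'
  set b' := max τ x with hb'
  have ha'I : a' ∈ I := by rcases min_choice τ x with h | h <;> rw [ha', h] <;> assumption
  have hb'I : b' ∈ I := by rcases max_choice τ x with h | h <;> rw [hb', h] <;> assumption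
  obtain ⟨ε₁, hε₁, hball₁⟩ := Metric.isOpen_iff.1 hIopen a' ha'I
  obtain ⟨ε₂, hε₂, hball₂⟩ := Metric.isOpen_iff.1 hIopen b' hb'I
  set ε := min ε₁ ε₂ / 2 with hε
  have hεpos : 0 < ε := by positivity
  set a := a' - ε with haa
  set b := b' + ε with hbb
  have haI : a ∈ I := by
    apply hball₁
    simp only [Metric.mem_ball, Real.dist_eq, haa]
    rw [abs_of_nonpos (by linarith)]
    simp only [hε]
    rw [neg_sub]
    calc a' - (a' - min ε₁ ε₂ / 2) = min ε₁ ε₂ / 2 := by ring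
    _ < ε₁ := by have := min_le_left ε₁ ε₂; linarith
  have hbI : b ∈ I := by
    apply hball₂
    simp only [Metric.mem_ball, Real.dist_eq, hbb]
    rw [abs_of_nonneg (by linarith)]
    calc b' + ε - b' = ε := by ring
    _ < ε₂ := by have := min_le_right ε₁ ε₂; simp only [hε]; linarith
  have hIcc : Icc a b ⊆ I := hIconn.out haI hbI
  have ha'b' : a' ≤ b' := min_le_max
  have hτab : τ ∈ Ioo a b := by
    constructor
    · have h1 : a' ≤ τ := min_le_left τ x
      simp only [haa]; linarith
    · have h2 : τ ≤ b' := le_max_left τ x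
      simp only [hbb]; linarith
  have hxab : x ∈ Icc a b := by
    constructor
    · have h1 : a' ≤ x := min_le_right τ x
      simp only [haa]; linarith
    · have h2 : x ≤ b' := le_max_right τ x
      simp only [hbb]; linarith
  -- bound κ on Icc a b, and clamp it
  obtain ⟨M, hM⟩ := (isCompact_Icc (a := a) (b := b)).exists_bound_of_continuousOn (hκ.mono hIcc)
  set L : ℝ := max M 1 with hL
  have hL1 : 1 ≤ L := le_max_right _ _
  have hL0 : 0 < L := lt_of_lt_of_le one_pos hL1
  set κ' : ℝ → ℝ := fun u => max (-L) (min L (κ u)) with hκ'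
  have hclamp : ∀ u ∈ Icc a b, κ' u = κ u := by
    intro u hu
    have h1 : |κ u| ≤ M := by simpa [Real.norm_eq_abs] using hM u hu
    have h2 : κ u ≤ L := le_trans (le_of_abs_le h1) (le_max_left _ _)
    have h3 : -L ≤ κ u := by
      have := neg_abs_le (κ u); have : -M ≤ κ u := by
        have := abs_le.1 h1; linarith [this.1]
      have hML : M ≤ L := le_max_left _ _
      linarith
    simp [hκ', min_eq_right h2, max_eq_right h3]
  have hbound : ∀ u, |κ' u| ≤ L := by
    intro u
    rw [abs_le]
    constructor
    · exact le_max_left _ _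
    · exact max_le (by linarith) (min_le_left _ _)
  -- the vector field
  set v : ℝ → ℝ × ℝ → ℝ × ℝ := fun u p => (p.2, -(κ' u * p.1)) with hv
  have hLip : ∀ u, LipschitzOnWith L.toNNReal (v u) Set.univ := by
    intro u
    apply LipschitzWith.lipschitzOnWith
    apply LipschitzWith.of_dist_le_mul
    intro p r
    rw [Real.coe_toNNReal _ hL0.le, Prod.dist_eq, hv]
    simp only [Prod.fst, Prod.snd]
    have hd1 : dist p.1 r.1 ≤ dist p r := by rw [Prod.dist_eq]; exact le_max_left _ _
    have hd2 : dist p.2 r.2 ≤ dist p r := by rw [Prod.dist_eq]; exact le_max_right _ _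
    apply max_le
    · calc dist p.2 r.2 ≤ dist p r := hd2
      _ ≤ L * dist p r := le_mul_of_one_le_left dist_nonneg hL1
    · have heq2 : dist (-(κ' u * p.1)) (-(κ' u * r.1)) = |κ' u| * dist p.1 r.1 := by
        rw [dist_neg_neg, Real.dist_eq, Real.dist_eq, ← abs_mul]
        ring_nf
      rw [heq2]
      calc |κ' u| * dist p.1 r.1 ≤ L * dist p.1 r.1 :=
            mul_le_mul_of_nonneg_right (hbound u) dist_nonneg
      _ ≤ L * dist p r := mul_le_mul_of_nonneg_left hd1 hL0.le
  set F : ℝ → ℝ × ℝ := fun u => (f u, f' u) with hF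
  set G : ℝ → ℝ × ℝ := fun u => (g u, g' u) with hG
  have hF' : ∀ u ∈ Ioo a b, HasDerivAt F (v u (F u)) u := by
    intro u hu
    have huI : u ∈ I := hIcc (Ioo_subset_Icc_self hu)
    have h := (hf u huI).prodMk (hf2 u huI)
    have : v u (F u) = (f' u, -(κ u * f u)) := by
      simp [hv, hF, hclamp u (Ioo_subset_Icc_self hu)]
    rw [this]
    exact h
  have hG' : ∀ u ∈ Ioo a b, HasDerivAt G (v u (G u)) u := by
    intro u hu
    have huI : u ∈ I := hIcc (Ioo_subset_Icc_self hu)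
    have h := (hg u huI).prodMk (hg2 u huI)
    have : v u (G u) = (g' u, -(κ u * g u)) := by
      simp [hv, hG, hclamp u (Ioo_subset_Icc_self hu)]
    rw [this]
    exact h
  have hFc : ContinuousOn F (Icc a b) := fun u hu =>
    (((hf u (hIcc hu)).continuousAt).prodMk ((hf2 u (hIcc hu)).continuousAt)).continuousWithinAt
  have hGc : ContinuousOn G (Icc a b) := fun u hu =>
    (((hg u (hIcc hu)).continuousAt).prodMk ((hg2 u (hIcc hu)).continuousAt)).continuousWithinAt
  have heq : F τ = G τ := by simp [hF, hG, h0, h0']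
  have := ODE_solution_unique_of_mem_Icc (fun u _ => hLip u) hτab hFc hF' (fun _ _ => trivial)
    hGc hG' (fun _ _ => trivial) heq hxab
  exact congrArg Prod.fst this
open Set

set_option maxHeartbeats 4000000 in
/-- The Feynman propagator of the TDHO satisfies the
time-dependent Schrödinger equation away from caustics: with `c, s` the fundamental
solutions on the open interval `I`, fix `t₀ ∈ I` and `q₀ ∈ ℝ`, let `J ⊆ I` be an
open interval on which `s(t,t₀) > 0`, and let
`K(q,t) = (2π)^{−1/2} e^{−iπ/4} s(t,t₀)^{−1/2} exp((i/(2 s(t,t₀)))(c(t₀,t) q² + c(t,t₀) q₀² − 2 q q₀))`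
(with the positive real root `s(t,t₀)^{−1/2}`). Then `K` is smooth in `q`,
differentiable in `t`, and satisfies
`i ∂ₜK = −½ ∂²_q K + ½ κ(t) q² K` on `ℝ × J`. -/
theorem stmt_10
    (I : Set ℝ) (hIopen : IsOpen I) (hIconn : I.OrdConnected)
    (κ : ℝ → ℝ) (hκ : ContinuousOn κ I)
    (c s c' s' : ℝ → ℝ → ℝ)
    (hcderiv : ∀ t₀ ∈ I, ∀ t ∈ I, HasDerivAt (fun u => c u t₀) (c' t t₀) t)
    (hcderiv2 : ∀ t₀ ∈ I, ∀ t ∈ I, HasDerivAt (fun u => c' u t₀) (-(κ t * c t t₀)) t)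
    (hsderiv : ∀ t₀ ∈ I, ∀ t ∈ I, HasDerivAt (fun u => s u t₀) (s' t t₀) t)
    (hsderiv2 : ∀ t₀ ∈ I, ∀ t ∈ I, HasDerivAt (fun u => s' u t₀) (-(κ t * s t t₀)) t)
    (hcinit : ∀ t₀ ∈ I, c t₀ t₀ = 1) (hcinit' : ∀ t₀ ∈ I, c' t₀ t₀ = 0)
    (hsinit : ∀ t₀ ∈ I, s t₀ t₀ = 0) (hsinit' : ∀ t₀ ∈ I, s' t₀ t₀ = 1)
    (t₀ : ℝ) (ht₀ : t₀ ∈ I) (q₀ : ℝ)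
    (J : Set ℝ) (hJopen : IsOpen J) (hJconn : J.OrdConnected) (hJI : J ⊆ I)
    (hspos : ∀ t ∈ J, 0 < s t t₀)
    (K : ℝ → ℝ → ℂ)
    (hK : ∀ q t : ℝ, K q t =
      ((Real.sqrt (2 * Real.pi))⁻¹ : ℂ) *
        Complex.exp (-((Real.pi / 4 : ℝ) : ℂ) * Complex.I) *
        ((Real.sqrt (s t t₀))⁻¹ : ℂ) *
        Complex.exp (Complex.I / (2 * (s t t₀ : ℂ)) *
          ((c t₀ t : ℂ) * (q : ℂ) ^ 2 + (c t t₀ : ℂ) * (q₀ : ℂ) ^ 2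
            - 2 * (q : ℂ) * (q₀ : ℂ)))) :
    ∀ q : ℝ, ∀ t ∈ J,
      ContDiff ℝ (⊤ : ℕ∞) (fun q' : ℝ => K q' t) ∧
      DifferentiableAt ℝ (fun t' : ℝ => K q t') t ∧
      Complex.I * deriv (fun t' : ℝ => K q t') t =
        -(1 / 2 : ℂ) * iteratedDeriv 2 (fun q' : ℝ => K q' t) q +
          (1 / 2 : ℂ) * (κ t : ℂ) * (q : ℂ) ^ 2 * K q t := by
  -- Wronskian is constant equal to 1
  have hWron : ∀ u ∈ I, c u t₀ * s' u t₀ - c' u t₀ * s u t₀ = 1 := by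
    intro u hu
    have hW : ∀ w ∈ I, HasDerivAt (fun y => c y t₀ * s' y t₀ - c' y t₀ * s y t₀) 0 w := by
      intro w hw
      have h := ((hcderiv t₀ ht₀ w hw).mul (hsderiv2 t₀ ht₀ w hw)).sub
        ((hcderiv2 t₀ ht₀ w hw).mul (hsderiv t₀ ht₀ w hw))
      exact h.congr_deriv (by ring)
    have := tdho_const I _ hW hIconn hu ht₀
    rw [this, hcinit t₀ ht₀, hcinit' t₀ ht₀, hsinit t₀ ht₀, hsinit' t₀ ht₀]
    ring
  -- the key two-variable identity : c t₀ u = s' u t₀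
  have hct : ∀ u ∈ I, c t₀ u = s' u t₀ := by
    intro u huI
    have hg : ∀ x ∈ I, HasDerivAt (fun y => s' u t₀ * c y t₀ - c' u t₀ * s y t₀)
        (s' u t₀ * c' x t₀ - c' u t₀ * s' x t₀) x := by
      intro x hxI
      exact ((hcderiv t₀ ht₀ x hxI).const_mul _).sub ((hsderiv t₀ ht₀ x hxI).const_mul _)
    have hg2 : ∀ x ∈ I, HasDerivAt (fun y => s' u t₀ * c' y t₀ - c' u t₀ * s' y t₀)
        (-(κ x * (s' u t₀ * c x t₀ - c' u t₀ * s x t₀))) x := by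
      intro x hxI
      have h := ((hcderiv2 t₀ ht₀ x hxI).const_mul (s' u t₀)).sub
        ((hsderiv2 t₀ ht₀ x hxI).const_mul (c' u t₀))
      exact h.congr_deriv (by ring)
    have huniq := tdho_unique I hIopen hIconn κ hκ
      (fun y => c y u) (fun y => c' y u)
      (fun y => s' u t₀ * c y t₀ - c' u t₀ * s y t₀)
      (fun y => s' u t₀ * c' y t₀ - c' u t₀ * s' y t₀)
      (fun x hx => hcderiv u huI x hx) (fun x hx => hcderiv2 u huI x hx)
      hg hg2 huI
      (by show c u u = s' u t₀ * c u t₀ - c' u t₀ * s u t₀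
          rw [hcinit u huI]; have := hWron u huI; linarith)
      (by show c' u u = s' u t₀ * c' u t₀ - c' u t₀ * s' u t₀
          rw [hcinit' u huI]; ring)
      t₀ ht₀
    have h : c t₀ u = s' u t₀ * c t₀ t₀ - c' u t₀ * s t₀ t₀ := huniq
    rw [hsinit t₀ ht₀, hcinit t₀ ht₀, mul_zero, mul_one, sub_zero] at h
    exact h
  intro q t ht
  have htI : t ∈ I := hJI ht
  have hσ : 0 < s t t₀ := hspos t ht
  have hsmooth : ContDiff ℝ (⊤ : ℕ∞) (fun q' : ℝ => K q' t) := by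
    have heq : (fun q' : ℝ => K q' t) = fun q' : ℝ =>
        ((Real.sqrt (2 * Real.pi))⁻¹ : ℂ) *
          Complex.exp (-((Real.pi / 4 : ℝ) : ℂ) * Complex.I) *
          ((Real.sqrt (s t t₀))⁻¹ : ℂ) *
          Complex.exp (Complex.I / (2 * (s t t₀ : ℂ)) *
            ((c t₀ t : ℂ) * (q' : ℂ) ^ 2 + (c t t₀ : ℂ) * (q₀ : ℂ) ^ 2
              - 2 * (q' : ℂ) * (q₀ : ℂ))) := funext fun q' => hK q' t
    rw [heq]
    apply ContDiff.mul contDiff_const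
    apply ContDiff.cexp
    have hof : ContDiff ℝ (⊤ : ℕ∞) (fun x : ℝ => (x : ℂ)) := Complex.ofRealCLM.contDiff
    fun_prop
  -- derivative in t
  have hsne : Real.sqrt (s t t₀) ≠ 0 := ne_of_gt (Real.sqrt_pos.mpr hσ)
  have hsneC : ((Real.sqrt (s t t₀) : ℝ) : ℂ) ≠ 0 := by exact_mod_cast hsne
  have hσC : ((s t t₀ : ℝ) : ℂ) ≠ 0 := by exact_mod_cast hσ.ne'
  have h2σC : 2 * ((s t t₀ : ℝ) : ℂ) ≠ 0 := mul_ne_zero two_ne_zero hσC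
  have hs_ : HasDerivAt (fun u => s u t₀) (s' t t₀) t := hsderiv t₀ ht₀ t htI
  have hsp_ : HasDerivAt (fun u => s' u t₀) (-(κ t * s t t₀)) t := hsderiv2 t₀ ht₀ t htI
  have hc_ : HasDerivAt (fun u => c u t₀) (c' t t₀) t := hcderiv t₀ ht₀ t htI
  have hsqrt : HasDerivAt (fun u => Real.sqrt (s u t₀))
      (1 / (2 * Real.sqrt (s t t₀)) * s' t t₀) t := by
    have h := (Real.hasDerivAt_sqrt hσ.ne').comp t hs_
    simpa [Function.comp_def] using h
  have hsqrtC : HasDerivAt (fun u => ((Real.sqrt (s u t₀) : ℝ) : ℂ))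
      ((1 / (2 * Real.sqrt (s t t₀)) * s' t t₀ : ℝ) : ℂ) t := hsqrt.ofReal_comp
  have hinvC : HasDerivAt (fun u => (((Real.sqrt (s u t₀) : ℝ) : ℂ))⁻¹)
      (((-(1 / (2 * Real.sqrt (s t t₀)) * s' t t₀) / (Real.sqrt (s t t₀)) ^ 2 : ℝ)) : ℂ) t := by
    have h := (hsqrt.inv hsne).ofReal_comp
    simpa only [Pi.inv_apply, Complex.ofReal_inv] using h
  have hdenom : HasDerivAt (fun u => 2 * ((s u t₀ : ℝ) : ℂ)) (2 * ((s' t t₀ : ℝ) : ℂ)) t :=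
    hs_.ofReal_comp.const_mul 2
  have hw : HasDerivAt (fun u => Complex.I / (2 * ((s u t₀ : ℝ) : ℂ)))
      ((0 * (2 * ((s t t₀ : ℝ) : ℂ)) - Complex.I * (2 * ((s' t t₀ : ℝ) : ℂ))) /
        (2 * ((s t t₀ : ℝ) : ℂ)) ^ 2) t := (hasDerivAt_const t Complex.I).div hdenom h2σC
  have hP : HasDerivAt (fun u => ((s' u t₀ : ℝ) : ℂ) * (q : ℂ) ^ 2 +
        ((c u t₀ : ℝ) : ℂ) * (q₀ : ℂ) ^ 2 - 2 * (q : ℂ) * (q₀ : ℂ))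
      (((-(κ t * s t t₀) : ℝ) : ℂ) * (q : ℂ) ^ 2 + ((c' t t₀ : ℝ) : ℂ) * (q₀ : ℂ) ^ 2) t :=
    (((hsp_.ofReal_comp.mul_const ((q : ℂ) ^ 2)).add
      (hc_.ofReal_comp.mul_const ((q₀ : ℂ) ^ 2))).sub_const (2 * (q : ℂ) * (q₀ : ℂ)))
  have harg := hw.mul hP
  have hexpt := harg.cexp
  have hG := (hinvC.const_mul (((Real.sqrt (2 * Real.pi))⁻¹ : ℂ) *
      Complex.exp (-((Real.pi / 4 : ℝ) : ℂ) * Complex.I))).mul hexpt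
  have hEv : (fun u : ℝ => K q u) =ᶠ[nhds t] (fun u : ℝ =>
      ((Real.sqrt (2 * Real.pi))⁻¹ : ℂ) *
        Complex.exp (-((Real.pi / 4 : ℝ) : ℂ) * Complex.I) *
        ((Real.sqrt (s u t₀))⁻¹ : ℂ) *
        Complex.exp (Complex.I / (2 * (s u t₀ : ℂ)) *
          ((s' u t₀ : ℂ) * (q : ℂ) ^ 2 + (c u t₀ : ℂ) * (q₀ : ℂ) ^ 2
            - 2 * (q : ℂ) * (q₀ : ℂ)))) := by
    filter_upwards [hJopen.mem_nhds ht] with u hu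
    rw [hK q u, hct u (hJI hu)]
  have hKt := hG.congr_of_eventuallyEq hEv
  refine ⟨hsmooth, hKt.differentiableAt, ?_⟩
  -- q-derivatives
  have hofR : ∀ x : ℝ, HasDerivAt (fun y : ℝ => (y : ℂ)) 1 x := fun x => by
    simpa using (hasDerivAt_id x).ofReal_comp
  have hargx : ∀ x : ℝ, HasDerivAt (fun y : ℝ => Complex.I / (2 * (s t t₀ : ℂ)) *
      ((c t₀ t : ℂ) * (y : ℂ) ^ 2 + (c t t₀ : ℂ) * (q₀ : ℂ) ^ 2 - 2 * (y : ℂ) * (q₀ : ℂ)))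
      (Complex.I / (2 * (s t t₀ : ℂ)) * ((c t₀ t : ℂ) * (2 * (x : ℂ)) - 2 * (q₀ : ℂ))) x := by
    intro x
    have hx2 : HasDerivAt (fun y : ℝ => (y : ℂ) ^ 2) (2 * (x : ℂ)) x := by
      have h := (hofR x).mul (hofR x)
      simp only [pow_two]
      exact h.congr_deriv (by ring)
    have h := ((((hx2.const_mul ((c t₀ t : ℂ))).add_const ((c t t₀ : ℂ) * (q₀ : ℂ) ^ 2)).sub
      (((hofR x).const_mul 2).mul_const ((q₀ : ℂ)))).const_mul (Complex.I / (2 * (s t t₀ : ℂ))))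
    exact h.congr_deriv (by ring)
  have funKq : (fun q' : ℝ => K q' t) = fun q' : ℝ =>
      (((Real.sqrt (2 * Real.pi))⁻¹ : ℂ) *
        Complex.exp (-((Real.pi / 4 : ℝ) : ℂ) * Complex.I) *
        ((Real.sqrt (s t t₀))⁻¹ : ℂ)) *
      Complex.exp (Complex.I / (2 * (s t t₀ : ℂ)) *
        ((c t₀ t : ℂ) * (q' : ℂ) ^ 2 + (c t t₀ : ℂ) * (q₀ : ℂ) ^ 2
          - 2 * (q' : ℂ) * (q₀ : ℂ))) := funext fun q' => hK q' t
  have hfq : ∀ x : ℝ, HasDerivAt (fun q' : ℝ => K q' t)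
      ((((Real.sqrt (2 * Real.pi))⁻¹ : ℂ) *
        Complex.exp (-((Real.pi / 4 : ℝ) : ℂ) * Complex.I) *
        ((Real.sqrt (s t t₀))⁻¹ : ℂ)) *
        Complex.exp (Complex.I / (2 * (s t t₀ : ℂ)) *
          ((c t₀ t : ℂ) * (x : ℂ) ^ 2 + (c t t₀ : ℂ) * (q₀ : ℂ) ^ 2
            - 2 * (x : ℂ) * (q₀ : ℂ))) *
        (Complex.I / (2 * (s t t₀ : ℂ)) * ((c t₀ t : ℂ) * (2 * (x : ℂ)) - 2 * (q₀ : ℂ)))) x := by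
    intro x
    rw [funKq]
    have h := ((hargx x).cexp.const_mul
      (((Real.sqrt (2 * Real.pi))⁻¹ : ℂ) *
        Complex.exp (-((Real.pi / 4 : ℝ) : ℂ) * Complex.I) *
        ((Real.sqrt (s t t₀))⁻¹ : ℂ)))
    exact h.congr_deriv (by ring)
  have hderivfun : deriv (fun q' : ℝ => K q' t) = fun x : ℝ =>
      ((((Real.sqrt (2 * Real.pi))⁻¹ : ℂ) *
        Complex.exp (-((Real.pi / 4 : ℝ) : ℂ) * Complex.I) *
        ((Real.sqrt (s t t₀))⁻¹ : ℂ)) *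
        Complex.exp (Complex.I / (2 * (s t t₀ : ℂ)) *
          ((c t₀ t : ℂ) * (x : ℂ) ^ 2 + (c t t₀ : ℂ) * (q₀ : ℂ) ^ 2
            - 2 * (x : ℂ) * (q₀ : ℂ))) *
        (Complex.I / (2 * (s t t₀ : ℂ)) * ((c t₀ t : ℂ) * (2 * (x : ℂ)) - 2 * (q₀ : ℂ)))) :=
    funext fun x => (hfq x).deriv
  have hlin : HasDerivAt (fun x : ℝ => Complex.I / (2 * (s t t₀ : ℂ)) *
      ((c t₀ t : ℂ) * (2 * (x : ℂ)) - 2 * (q₀ : ℂ)))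
      (Complex.I / (2 * (s t t₀ : ℂ)) * ((c t₀ t : ℂ) * 2)) q := by
    have h := ((((hofR q).const_mul 2).const_mul ((c t₀ t : ℂ))).sub_const
      (2 * (q₀ : ℂ))).const_mul (Complex.I / (2 * (s t t₀ : ℂ)))
    exact h.congr_deriv (by ring)
  have hsecond := (((hargx q).cexp.const_mul
      (((Real.sqrt (2 * Real.pi))⁻¹ : ℂ) *
        Complex.exp (-((Real.pi / 4 : ℝ) : ℂ) * Complex.I) *
        ((Real.sqrt (s t t₀))⁻¹ : ℂ))).mul hlin)
  have h2it : iteratedDeriv 2 (fun q' : ℝ => K q' t) q =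
      deriv (deriv (fun q' : ℝ => K q' t)) q := by
    have h21 : (2 : ℕ) = 1 + 1 := rfl
    rw [h21, iteratedDeriv_succ, iteratedDeriv_one]
  simp only [Pi.mul_def] at hsecond hKt
  rw [hKt.deriv, h2it, hderivfun, hsecond.deriv, hK q t, hct t htI]
  have hq2 : ((Real.sqrt (s t t₀) : ℝ) : ℂ) ^ 2 = ((s t t₀ : ℝ) : ℂ) := by
    rw [← Complex.ofReal_pow, Real.sq_sqrt hσ.le]
  have hWc : ((c t t₀ : ℝ) : ℂ) * ((s' t t₀ : ℝ) : ℂ)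
      - ((c' t t₀ : ℝ) : ℂ) * ((s t t₀ : ℝ) : ℂ) = 1 := by
    exact_mod_cast hWron t htI
  have h2πne : ((Real.sqrt (2 * Real.pi) : ℝ) : ℂ) ≠ 0 := by
    have h0 : (0:ℝ) < Real.sqrt (2 * Real.pi) := Real.sqrt_pos.mpr (by positivity)
    exact_mod_cast h0.ne'
  have h2c : ((Real.sqrt 2 : ℝ) : ℂ) ≠ 0 := by
    have h0 : (0:ℝ) < Real.sqrt 2 := Real.sqrt_pos.mpr (by norm_num)
    exact_mod_cast h0.ne'
  have hπc : ((Real.sqrt Real.pi : ℝ) : ℂ) ≠ 0 := by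
    have h0 : (0:ℝ) < Real.sqrt Real.pi := Real.sqrt_pos.mpr Real.pi_pos
    exact_mod_cast h0.ne'
  push_cast
  rw [← hq2] at hWc ⊢
  set rr : ℂ := ((Real.sqrt (s t t₀) : ℝ) : ℂ) with hrrdef
  set spc : ℂ := ((s' t t₀ : ℝ) : ℂ) with hspcdef
  set gac : ℂ := ((c t t₀ : ℝ) : ℂ) with hgacdef
  set gpc : ℂ := ((c' t t₀ : ℝ) : ℂ) with hgpcdef
  set kc : ℂ := ((κ t : ℝ) : ℂ) with hkcdef
  set qc : ℂ := ((q : ℝ) : ℂ) with hqcdef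
  set q0c : ℂ := ((q₀ : ℝ) : ℂ) with hq0cdef
  set pc : ℂ := ((Real.sqrt (2 * Real.pi) : ℝ) : ℂ) with hpcdef
  set e1 : ℂ := Complex.exp (-(((Real.pi : ℝ) : ℂ) / 4) * Complex.I) with he1def
  set e2 : ℂ := Complex.exp (Complex.I / (2 * rr ^ 2) *
    (spc * qc ^ 2 + gac * q0c ^ 2 - 2 * qc * q0c)) with he2def
  have hru : rr * rr⁻¹ = 1 := mul_inv_cancel₀ hsneC
  linear_combination
    ((1:ℂ)/2) * e1 * e2 * (rr⁻¹)^5 * q0c^2 * pc⁻¹ * hWc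
    + (((1:ℂ)/2) * e1 * e2 * (rr⁻¹)^3 * gpc * q0c^2 * pc⁻¹
      + ((1:ℂ)/2) * e1 * e2 * (rr⁻¹)^5 * q0c^2 * pc⁻¹
      - ((1:ℂ)/2) * e1 * e2 * (rr⁻¹)^5 * spc * gac * q0c^2 * pc⁻¹
      - ((1:ℂ)/2) * e1 * e2 * rr^2 * (rr⁻¹)^3 * kc * qc^2 * pc⁻¹) * Complex.I_sq
    + (((1:ℂ)/2) * e1 * e2 * rr⁻¹ * kc * qc^2 * pc⁻¹
      + ((1:ℂ)/2) * e1 * e2 * (rr⁻¹)^3 * gpc * q0c^2 * pc⁻¹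
      + ((1:ℂ)/2) * e1 * e2 * rr * (rr⁻¹)^2 * kc * qc^2 * pc⁻¹
      + ((1:ℂ)/2) * e1 * e2 * rr * (rr⁻¹)^4 * gpc * q0c^2 * pc⁻¹) * hru
end

section
/- Let (ρ_ℓ)_{ℓ≥1} be a sequence of positive reals and (ν_ℓ)_{ℓ≥1} a sequence of reals. Then the following three conditions hold simultaneously: (i) ∑_{ℓ≥1} (ν_ℓ/ρ_ℓ)² < ∞, (ii) ∑_{ℓ≥1} (ρ_ℓ·ν_ℓ/ℓ)² < ∞, and (iii) ∑_{ℓ≥1} ( ν_ℓ² + 4ρ_ℓ²/π² − ρ_ℓ⁻² )² < ∞, if and only if ∑_{ℓ≥1} ( ρ_ℓ − √(π/2) )² < ∞ and ∑_{ℓ≥1} ν_ℓ² < ∞ (i.e. ρ_ℓ = √(π/2) + x_ℓ with (x_ℓ) square-summable and (ν_ℓ) square-summable). -/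
open Filter Real

noncomputable def cc : ℝ := Real.sqrt (Real.pi / 2)

lemma hcc2 : cc ^ 2 = Real.pi / 2 := Real.sq_sqrt (by positivity)

lemma hcc1 : 1 < cc := by
  rw [show (1:ℝ) = Real.sqrt 1 by simp [Real.sqrt_one]]
  exact Real.sqrt_lt_sqrt (by norm_num) (by linarith [Real.pi_gt_three])

lemma hcc_lt : cc < 3/2 := by
  nlinarith [hcc2, Real.pi_lt_d2, Real.sqrt_nonneg (Real.pi/2)]

lemma L1 (r : ℝ) (hr : r ≠ 0) :
    4*r^2/Real.pi^2 - (r^2)⁻¹ = 4*(r-cc)*(r+cc)*(r^2+cc^2) / (Real.pi^2 * r^2) := by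
  have hp := Real.pi_ne_zero
  have h2 := hcc2
  field_simp
  nlinarith [h2, sq_nonneg r]

lemma L4 (r : ℝ) (hr : 0 < r) (h : 4*r^2/Real.pi^2 - (r^2)⁻¹ ≤ 1) : r ≤ Real.pi := by
  have hp := Real.pi_gt_three
  have key : (4*r^2/Real.pi^2 - (r^2)⁻¹) * (Real.pi^2 * r^2) = 4*r^4 - Real.pi^2 := by
    field_simp
  have h' : 4*r^4 - Real.pi^2 ≤ Real.pi^2 * r^2 := by
    rw [← key]
    have : (0:ℝ) < Real.pi^2 * r^2 := by positivity
    nlinarith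
  by_contra hc
  push_neg at hc
  have hr2 : Real.pi^2 < r^2 := by nlinarith
  have hmul : 4*Real.pi^2*r^2 < 4*(r^2*r^2) := by nlinarith
  have h4 : r^2*r^2 = r^4 := by ring
  have hmul2 : Real.pi^2*Real.pi^2 < Real.pi^2*r^2 := by
    exact mul_lt_mul_of_pos_left hr2 (by positivity)
  have h9 : (9:ℝ) < Real.pi^2 := by nlinarith [hp]
  have hv : 9*Real.pi^2 < Real.pi^2*Real.pi^2 := by
    calc 9*Real.pi^2 = Real.pi^2*9 := by ring
    _ < Real.pi^2*Real.pi^2 := mul_lt_mul_of_pos_left h9 (by positivity)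
  linarith [hr2, hmul, h4, hmul2, hv]

lemma L5 (r : ℝ) (hr : 0 < r) (h : -1 ≤ 4*r^2/Real.pi^2 - (r^2)⁻¹) : 1/2 < r := by
  have hp := Real.pi_gt_three
  have key : (4*r^2/Real.pi^2 - (r^2)⁻¹) * (Real.pi^2 * r^2) = 4*r^4 - Real.pi^2 := by
    field_simp
  have h' : -(Real.pi^2 * r^2) ≤ 4*r^4 - Real.pi^2 := by
    rw [← key]
    have : (0:ℝ) < Real.pi^2 * r^2 := by positivity
    nlinarith
  by_contra hc
  push_neg at hc
  have h1 : r^2 ≤ 1/4 := by nlinarith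
  have h2 : r^4 ≤ 1/16 := by nlinarith [sq_nonneg (r^2)]
  nlinarith [h1, h2, mul_le_mul_of_nonneg_left h1 (le_of_lt (by positivity : (0:ℝ) < Real.pi^2))]

lemma LD (r : ℝ) : 4*r^4 - Real.pi^2 = 4*(r-cc)*(r+cc)*(r^2+cc^2) := by
  linear_combination (4*cc^2 + 2*Real.pi) * hcc2

lemma Lgsq (r : ℝ) (hr : 0 < r) :
    (4*r^2/Real.pi^2 - (r^2)⁻¹)^2 = (4*r^4 - Real.pi^2)^2 / (Real.pi^4 * r^4) := by
  have hp := Real.pi_ne_zero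
  field_simp

lemma L2 (r : ℝ) (h1 : 1/2 < r) (h2 : r ≤ Real.pi) :
    (r - cc)^2 ≤ Real.pi^6 * (4*r^2/Real.pi^2 - (r^2)⁻¹)^2 := by
  have hr : 0 < r := by linarith
  have hp := Real.pi_gt_three
  rw [Lgsq r hr, LD r]
  have heq : Real.pi^6 * ((4*(r-cc)*(r+cc)*(r^2+cc^2))^2 / (Real.pi^4 * r^4))
      = (16*Real.pi^2*(r+cc)^2*(r^2+cc^2)^2) * (r-cc)^2 / r^4 := by
    have hπ := Real.pi_ne_zero
    field_simp
    ring
  rw [heq, le_div_iff₀ (by positivity : (0:ℝ) < r^4)]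
  have hc1 := hcc1
  have hc2 := hcc2
  have hs1 : (3/2:ℝ)^2 ≤ (r+cc)^2 := by nlinarith
  have hs2 : (Real.pi/2)^2 ≤ (r^2+cc^2)^2 := by nlinarith [sq_nonneg r]
  have hprod : (3/2:ℝ)^2 * (Real.pi/2)^2 ≤ (r+cc)^2 * (r^2+cc^2)^2 :=
    mul_le_mul hs1 hs2 (by positivity) (by positivity)
  have hA : Real.pi^4 ≤ 16*Real.pi^2*(r+cc)^2*(r^2+cc^2)^2 := by
    nlinarith [mul_le_mul_of_nonneg_left hprod (by positivity : (0:ℝ) ≤ 16*Real.pi^2),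
      pow_pos Real.pi_pos 4]
  have hr4 : r^4 ≤ Real.pi^4 := pow_le_pow_left₀ (le_of_lt hr) h2 4
  nlinarith [mul_le_mul_of_nonneg_right hr4 (sq_nonneg (r-cc)),
    mul_le_mul_of_nonneg_right hA (sq_nonneg (r-cc))]

lemma L3 (r : ℝ) (h1 : 1/2 < r) (h2 : r ≤ 3) :
    (4*r^2/Real.pi^2 - (r^2)⁻¹)^2 ≤ 10000 * (r - cc)^2 := by
  have hr : 0 < r := by linarith
  have hp := Real.pi_gt_three
  rw [Lgsq r hr, LD r]
  rw [div_le_iff₀ (by positivity : (0:ℝ) < Real.pi^4 * r^4)]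
  have hc1 := hcc1
  have hc3 := hcc_lt
  have hs := sq_nonneg (r - cc)
  have hb1 : (r+cc)^2 ≤ (9/2:ℝ)^2 := by nlinarith
  have hb2 : (r^2+cc^2)^2 ≤ (45/4:ℝ)^2 := by
    have hsum : r^2+cc^2 ≤ 45/4 := by nlinarith [Real.pi_lt_d2, hcc2]
    exact pow_le_pow_left₀ (by positivity) hsum 2
  have hb3 : (81/16:ℝ) ≤ Real.pi^4 * r^4 := by
    have hπ4 : (81:ℝ) ≤ Real.pi^4 := by nlinarith [sq_nonneg (Real.pi - 3), sq_nonneg (Real.pi^2 - 9)]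
    have hr4 : (1/16:ℝ) ≤ r^4 := by nlinarith [sq_nonneg (r - 1/2), sq_nonneg (r^2 - 1/4)]
    nlinarith [mul_le_mul hπ4 hr4 (by norm_num) (by positivity)]
  have hprod : (r+cc)^2 * (r^2+cc^2)^2 ≤ (9/2:ℝ)^2 * (45/4:ℝ)^2 :=
    mul_le_mul hb1 hb2 (by positivity) (by positivity)
  have hL : (4*(r-cc)*(r+cc)*(r^2+cc^2))^2 ≤ 16 * ((9/2:ℝ)^2 * (45/4:ℝ)^2) * (r-cc)^2 := by
    nlinarith [mul_le_mul_of_nonneg_right hprod hs,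
      mul_le_mul_of_nonneg_left (mul_le_mul_of_nonneg_right hprod hs) (by norm_num : (0:ℝ) ≤ 16)]
  have hR : 10000 * (81/16:ℝ) * (r-cc)^2 ≤ 10000 * (r-cc)^2 * (Real.pi^4 * r^4) := by
    nlinarith [mul_le_mul_of_nonneg_right hb3 hs]
  nlinarith [hL, hR]

lemma summable_of_ev {f g : ℕ → ℝ} (hg : Summable g)
    (h : ∀ᶠ n in atTop, |f n| ≤ g n) : Summable f := by
  obtain ⟨N, hN⟩ := eventually_atTop.mp h
  rw [← summable_nat_add_iff N] at hg ⊢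
  exact Summable.of_norm_bounded hg (fun n => hN (n + N) (by omega))

lemma tendsto_of_sq_summable {f : ℕ → ℝ} (h : Summable fun n => (f n)^2) :
    Tendsto f atTop (nhds 0) := by
  have h2 := h.tendsto_atTop_zero
  have habs : Tendsto (fun n => |f n|) atTop (nhds 0) := by
    have := (Real.continuous_sqrt.tendsto 0).comp h2
    simpa [Function.comp_def, Real.sqrt_sq_eq_abs, Real.sqrt_zero] using this
  exact tendsto_zero_iff_abs_tendsto_zero _ |>.mpr habs

/-- Let `(ρ_ℓ)_{ℓ≥1}` be a sequence of positive reals and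
`(ν_ℓ)_{ℓ≥1}` a sequence of reals (here realized as `ρ, ν : ℕ → ℝ` evaluated at
indices `ℓ + 1 ≥ 1`). Then the three conditions
(i) `∑ (ν_ℓ/ρ_ℓ)² < ∞`, (ii) `∑ (ρ_ℓ ν_ℓ/ℓ)² < ∞`, and
(iii) `∑ (ν_ℓ² + 4ρ_ℓ²/π² − ρ_ℓ⁻²)² < ∞` hold simultaneously if and only if
`∑ (ρ_ℓ − √(π/2))² < ∞` and `∑ ν_ℓ² < ∞`, i.e. `ρ_ℓ = √(π/2) + x_ℓ` with `(x_ℓ)`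
square-summable and `(ν_ℓ)` square-summable. -/
theorem stmt_16
    (ρ ν : ℕ → ℝ) (hρpos : ∀ ℓ : ℕ, 0 < ρ (ℓ + 1)) :
    ((Summable fun ℓ : ℕ => (ν (ℓ + 1) / ρ (ℓ + 1)) ^ 2) ∧
     (Summable fun ℓ : ℕ => (ρ (ℓ + 1) * ν (ℓ + 1) / ((ℓ : ℝ) + 1)) ^ 2) ∧
     (Summable fun ℓ : ℕ =>
        (ν (ℓ + 1) ^ 2 + 4 * ρ (ℓ + 1) ^ 2 / Real.pi ^ 2 - (ρ (ℓ + 1) ^ 2)⁻¹) ^ 2)) ↔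
    ((Summable fun ℓ : ℕ => (ρ (ℓ + 1) - Real.sqrt (Real.pi / 2)) ^ 2) ∧
     (Summable fun ℓ : ℕ => ν (ℓ + 1) ^ 2)) := by
  have hccdef : Real.sqrt (Real.pi / 2) = cc := rfl
  rw [hccdef]
  constructor
  · rintro ⟨h1, -, h3⟩
    have hFto : Filter.Tendsto
        (fun ℓ : ℕ => ν (ℓ + 1) ^ 2 + 4 * ρ (ℓ + 1) ^ 2 / Real.pi ^ 2 - (ρ (ℓ + 1) ^ 2)⁻¹)
        Filter.atTop (nhds 0) := tendsto_of_sq_summable h3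
    have hRπ : ∀ᶠ ℓ : ℕ in Filter.atTop, ρ (ℓ + 1) ≤ Real.pi := by
      filter_upwards [hFto.eventually_le_const (by norm_num : (0:ℝ) < 1)] with ℓ h
      refine L4 (ρ (ℓ + 1)) (hρpos ℓ) ?_
      have hn2 : (0:ℝ) ≤ ν (ℓ + 1) ^ 2 := sq_nonneg _
      linarith
    -- ν² summable
    have hν2 : Summable fun ℓ : ℕ => ν (ℓ + 1) ^ 2 := by
      apply summable_of_ev (h1.mul_left (Real.pi ^ 2))
      filter_upwards [hRπ] with ℓ hπ
      have hr := hρpos ℓ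
      have key : (ν (ℓ + 1) / ρ (ℓ + 1)) ^ 2 * ρ (ℓ + 1) ^ 2 = ν (ℓ + 1) ^ 2 := by
        field_simp
      have hR2 : ρ (ℓ + 1) ^ 2 ≤ Real.pi ^ 2 := pow_le_pow_left₀ (le_of_lt hr) hπ 2
      rw [abs_of_nonneg (sq_nonneg _)]
      nlinarith [sq_nonneg (ν (ℓ + 1) / ρ (ℓ + 1))]
    have hN2to : Filter.Tendsto (fun ℓ : ℕ => ν (ℓ + 1) ^ 2) Filter.atTop (nhds 0) :=
      hν2.tendsto_atTop_zero
    have hGto : Filter.Tendsto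
        (fun ℓ : ℕ => 4 * ρ (ℓ + 1) ^ 2 / Real.pi ^ 2 - (ρ (ℓ + 1) ^ 2)⁻¹)
        Filter.atTop (nhds 0) := by
      have := hFto.sub hN2to
      simp only [sub_zero] at this
      convert this using 2 with ℓ
      ring
    have hGbd : ∀ᶠ ℓ : ℕ in Filter.atTop,
        (4 * ρ (ℓ + 1) ^ 2 / Real.pi ^ 2 - (ρ (ℓ + 1) ^ 2)⁻¹) ∈ Set.Ioo (-1 : ℝ) 1 :=
      hGto.eventually (Ioo_mem_nhds (by norm_num) (by norm_num))
    have hRrange : ∀ᶠ ℓ : ℕ in Filter.atTop, 1/2 < ρ (ℓ + 1) ∧ ρ (ℓ + 1) ≤ Real.pi := by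
      filter_upwards [hGbd] with ℓ hb
      exact ⟨L5 _ (hρpos ℓ) (le_of_lt hb.1), L4 _ (hρpos ℓ) (le_of_lt hb.2)⟩
    have hG2 : Summable fun ℓ : ℕ =>
        (4 * ρ (ℓ + 1) ^ 2 / Real.pi ^ 2 - (ρ (ℓ + 1) ^ 2)⁻¹) ^ 2 := by
      apply summable_of_ev ((h3.mul_left 2).add (hν2.mul_left 2))
      filter_upwards [hN2to.eventually_le_const (by norm_num : (0:ℝ) < 1)] with ℓ hsm
      rw [abs_of_nonneg (sq_nonneg _)]
      have h4 : (ν (ℓ + 1) ^ 2) ^ 2 ≤ ν (ℓ + 1) ^ 2 := by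
        nlinarith [sq_nonneg (ν (ℓ + 1))]
      nlinarith [sq_nonneg ((4 * ρ (ℓ + 1) ^ 2 / Real.pi ^ 2 - (ρ (ℓ + 1) ^ 2)⁻¹)
          + 2 * ν (ℓ + 1) ^ 2),
        mul_nonneg (sq_nonneg (ν (ℓ + 1))) (by linarith : (0:ℝ) ≤ 1 - ν (ℓ + 1) ^ 2)]
    refine ⟨?_, hν2⟩
    apply summable_of_ev (hG2.mul_left (Real.pi ^ 6))
    filter_upwards [hRrange] with ℓ ⟨ha, hb⟩
    rw [abs_of_nonneg (sq_nonneg _)]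
    exact L2 _ ha hb
  · rintro ⟨hx, hn⟩
    have hxto : Filter.Tendsto (fun ℓ : ℕ => ρ (ℓ + 1) - cc) Filter.atTop (nhds 0) :=
      tendsto_of_sq_summable hx
    have hRrange : ∀ᶠ ℓ : ℕ in Filter.atTop, 1/2 < ρ (ℓ + 1) ∧ ρ (ℓ + 1) ≤ 3 := by
      have hev := hxto.eventually
        (Ioo_mem_nhds (by norm_num : (-1/2 : ℝ) < 0) (by norm_num : (0:ℝ) < 1/2))
      filter_upwards [hev] with ℓ hb
      obtain ⟨hb1, hb2⟩ := hb
      have h1 := hcc1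
      have h2 := hcc_lt
      constructor <;> nlinarith
    refine ⟨?_, ?_, ?_⟩
    · apply summable_of_ev (hn.mul_left 4)
      filter_upwards [hRrange] with ℓ ⟨ha, hb⟩
      have hr := hρpos ℓ
      have key : (ν (ℓ + 1) / ρ (ℓ + 1)) ^ 2 * ρ (ℓ + 1) ^ 2 = ν (ℓ + 1) ^ 2 := by
        field_simp
      rw [abs_of_nonneg (sq_nonneg _)]
      nlinarith [mul_nonneg (sq_nonneg (ν (ℓ + 1) / ρ (ℓ + 1)))
        (by nlinarith : (0:ℝ) ≤ 4 * ρ (ℓ + 1) ^ 2 - 1)]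
    · apply summable_of_ev (hn.mul_left 9)
      filter_upwards [hRrange] with ℓ ⟨ha, hb⟩
      have hr := hρpos ℓ
      have hl1 : (1:ℝ) ≤ (ℓ:ℝ) + 1 := by
        have := Nat.cast_nonneg (α := ℝ) ℓ
        linarith
      rw [abs_of_nonneg (sq_nonneg _)]
      have e1 : (ρ (ℓ + 1) * ν (ℓ + 1) / ((ℓ:ℝ) + 1)) ^ 2
          = (ρ (ℓ + 1) * ν (ℓ + 1)) ^ 2 / ((ℓ:ℝ) + 1) ^ 2 := div_pow _ _ 2
      rw [e1]
      have e2 : (ρ (ℓ + 1) * ν (ℓ + 1)) ^ 2 / ((ℓ:ℝ) + 1) ^ 2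
          ≤ (ρ (ℓ + 1) * ν (ℓ + 1)) ^ 2 :=
        div_le_self (sq_nonneg _) (by nlinarith)
      have hρ2 : ρ (ℓ + 1) ^ 2 ≤ 9 := by nlinarith
      have e3 : (ρ (ℓ + 1) * ν (ℓ + 1)) ^ 2 ≤ 9 * ν (ℓ + 1) ^ 2 := by
        have := mul_le_mul_of_nonneg_right hρ2 (sq_nonneg (ν (ℓ + 1)))
        nlinarith [this]
      linarith
    · have hn2to : Filter.Tendsto (fun ℓ : ℕ => ν (ℓ + 1) ^ 2) Filter.atTop (nhds 0) :=
        hn.tendsto_atTop_zero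
      apply summable_of_ev ((hn.mul_left 2).add (hx.mul_left 20000))
      filter_upwards [hRrange, hn2to.eventually_le_const (by norm_num : (0:ℝ) < 1)]
        with ℓ ⟨ha, hb⟩ hsm
      rw [abs_of_nonneg (sq_nonneg _)]
      have hL3 := L3 (ρ (ℓ + 1)) ha hb
      have h4 : (ν (ℓ + 1) ^ 2) ^ 2 ≤ ν (ℓ + 1) ^ 2 := by
        nlinarith [sq_nonneg (ν (ℓ + 1))]
      nlinarith [sq_nonneg (ν (ℓ + 1) ^ 2 -
        (4 * ρ (ℓ + 1) ^ 2 / Real.pi ^ 2 - (ρ (ℓ + 1) ^ 2)⁻¹))]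
end
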